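/- (Tarski's theorem on the undefinability of arithmetical truth.) The set of Gödel numbers of sentences of the language of arithmetic that are true in the standard model ω is not definable in ω. -/

import Mathlib

namespace Boolos

/-- Terms of the first-order language of arithmetic: variables v₀,v₁,…, 0, successor s, +, ·. -/
inductive Term : Type
  | var : ℕ → Term
  | zero : Term
  | succ : Term → Term
  | add : Term → Term → Term
  | mul : Term → Term → Term
  deriving DecidableEq

/-- Formulas of the first-order language of arithmetic. -/
inductive Formula : Type
  | eq : Term → Term → Formula
  | lt : Term → Term → Formula
  | not : Formula → Formula
  | and : Formula → Formula → Formula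
  | or : Formula → Formula → Formula
  | imp : Formula → Formula → Formula
  | all : ℕ → Formula → Formula
  | ex : ℕ → Formula → Formula
  deriving DecidableEq

/-- The primitive symbols of the language (finitely many apart from the variables). -/
inductive Symbol : Type
  | zero : Symbol
  | succ : Symbol
  | plus : Symbol
  | times : Symbol
  | eqs : Symbol
  | lts : Symbol
  | nots : Symbol
  | ands : Symbol
  | ors : Symbol
  | imps : Symbol
  | alls : Symbol
  | exs : Symbol
  | var : ℕ → Symbol
  deriving DecidableEq

/-- Gödel numbers of the primitive symbols. -/
def Symbol.code : Symbol → ℕ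
  | .zero => 1
  | .succ => 2
  | .plus => 3
  | .times => 4
  | .eqs => 5
  | .lts => 6
  | .nots => 7
  | .ands => 8
  | .ors => 9
  | .imps => 10
  | .alls => 11
  | .exs => 12
  | .var n => 13 + n

/-- The sequence of symbols occurring in a term. -/
def Term.symbols : Term → List Symbol
  | .var i => [.var i]
  | .zero => [.zero]
  | .succ t => .succ :: t.symbols
  | .add t u => t.symbols ++ .plus :: u.symbols
  | .mul t u => t.symbols ++ .times :: u.symbols

/-- The sequence of symbols occurring in a formula. -/
def Formula.symbols : Formula → List Symbol
  | .eq t u => t.symbols ++ .eqs :: u.symbols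
  | .lt t u => t.symbols ++ .lts :: u.symbols
  | .not φ => .nots :: φ.symbols
  | .and φ ψ => φ.symbols ++ .ands :: ψ.symbols
  | .or φ ψ => φ.symbols ++ .ors :: ψ.symbols
  | .imp φ ψ => φ.symbols ++ .imps :: ψ.symbols
  | .all i φ => .alls :: .var i :: φ.symbols
  | .ex i φ => .exs :: .var i :: φ.symbols

/-- |e| : the length (number of symbols) of a term. -/
def Term.length (t : Term) : ℕ := t.symbols.length

/-- |μ| : the length (number of symbols) of a formula. -/
def Formula.length (φ : Formula) : ℕ := φ.symbols.length

/-- A fixed standard (pairing-based, injective) Gödel numbering of terms. -/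
def Term.code : Term → ℕ
  | .var i => Nat.pair 0 i
  | .zero => Nat.pair 1 0
  | .succ t => Nat.pair 2 t.code
  | .add t u => Nat.pair 3 (Nat.pair t.code u.code)
  | .mul t u => Nat.pair 4 (Nat.pair t.code u.code)

/-- ⌜μ⌝ : the Gödel number of a formula. -/
def Formula.gnum : Formula → ℕ
  | .eq t u => Nat.pair 0 (Nat.pair t.code u.code)
  | .lt t u => Nat.pair 1 (Nat.pair t.code u.code)
  | .not φ => Nat.pair 2 φ.gnum
  | .and φ ψ => Nat.pair 3 (Nat.pair φ.gnum ψ.gnum)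
  | .or φ ψ => Nat.pair 4 (Nat.pair φ.gnum ψ.gnum)
  | .imp φ ψ => Nat.pair 5 (Nat.pair φ.gnum ψ.gnum)
  | .all i φ => Nat.pair 6 (Nat.pair i φ.gnum)
  | .ex i φ => Nat.pair 7 (Nat.pair i φ.gnum)

/-- The variables occurring in a term. -/
def Term.varsOf : Term → Finset ℕ
  | .var i => {i}
  | .zero => ∅
  | .succ t => t.varsOf
  | .add t u => t.varsOf ∪ u.varsOf
  | .mul t u => t.varsOf ∪ u.varsOf

/-- All variables (free or bound) occurring in a formula. -/
def Formula.allVars : Formula → Finset ℕ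
  | .eq t u => t.varsOf ∪ u.varsOf
  | .lt t u => t.varsOf ∪ u.varsOf
  | .not φ => φ.allVars
  | .and φ ψ => φ.allVars ∪ ψ.allVars
  | .or φ ψ => φ.allVars ∪ ψ.allVars
  | .imp φ ψ => φ.allVars ∪ ψ.allVars
  | .all i φ => insert i φ.allVars
  | .ex i φ => insert i φ.allVars

/-- The free variables of a formula. -/
def Formula.freeVars : Formula → Finset ℕ
  | .eq t u => t.varsOf ∪ u.varsOf
  | .lt t u => t.varsOf ∪ u.varsOf
  | .not φ => φ.freeVars
  | .and φ ψ => φ.freeVars ∪ ψ.freeVars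
  | .or φ ψ => φ.freeVars ∪ ψ.freeVars
  | .imp φ ψ => φ.freeVars ∪ ψ.freeVars
  | .all i φ => φ.freeVars.erase i
  | .ex i φ => φ.freeVars.erase i

/-- Substitution of a term for a variable in a term. -/
def Term.subst : Term → ℕ → Term → Term
  | .var i, x, s => if i = x then s else .var i
  | .zero, _, _ => .zero
  | .succ t, x, s => .succ (t.subst x s)
  | .add t u, x, s => .add (t.subst x s) (u.subst x s)
  | .mul t u, x, s => .mul (t.subst x s) (u.subst x s)

/-- Substitution of a term for the free occurrences of a variable in a formula. -/
def Formula.subst : Formula → ℕ → Term → Formula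
  | .eq t u, x, s => .eq (t.subst x s) (u.subst x s)
  | .lt t u, x, s => .lt (t.subst x s) (u.subst x s)
  | .not φ, x, s => .not (φ.subst x s)
  | .and φ ψ, x, s => .and (φ.subst x s) (ψ.subst x s)
  | .or φ ψ, x, s => .or (φ.subst x s) (ψ.subst x s)
  | .imp φ ψ, x, s => .imp (φ.subst x s) (ψ.subst x s)
  | .all i φ, x, s => if i = x then .all i φ else .all i (φ.subst x s)
  | .ex i φ, x, s => if i = x then .ex i φ else .ex i (φ.subst x s)

/-- The number of occurrences of a variable in a term. -/
def Term.countOcc : Term → ℕ → ℕ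
  | .var i, x => if i = x then 1 else 0
  | .zero, _ => 0
  | .succ t, x => t.countOcc x
  | .add t u, x => t.countOcc x + u.countOcc x
  | .mul t u, x => t.countOcc x + u.countOcc x

/-- The number of free occurrences of a variable in a formula. -/
def Formula.countFreeOcc : Formula → ℕ → ℕ
  | .eq t u, x => t.countOcc x + u.countOcc x
  | .lt t u, x => t.countOcc x + u.countOcc x
  | .not φ, x => φ.countFreeOcc x
  | .and φ ψ, x => φ.countFreeOcc x + ψ.countFreeOcc x
  | .or φ ψ, x => φ.countFreeOcc x + ψ.countFreeOcc x
  | .imp φ ψ, x => φ.countFreeOcc x + ψ.countFreeOcc x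
  | .all i φ, x => if i = x then 0 else φ.countFreeOcc x
  | .ex i φ, x => if i = x then 0 else φ.countFreeOcc x

/-- The numeral s s … s 0 for a natural number. -/
def numeral : ℕ → Term
  | 0 => .zero
  | n + 1 => .succ (numeral n)

/-- Structures for the language of arithmetic. -/
structure Struct where
  carrier : Type
  zero : carrier
  succ : carrier → carrier
  add : carrier → carrier → carrier
  mul : carrier → carrier → carrier
  lt : carrier → carrier → Prop

/-- The value of a term in a structure under an assignment. -/
def Term.val (M : Struct) (v : ℕ → M.carrier) : Term → M.carrier
  | .var i => v i
  | .zero => M.zero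
  | .succ t => M.succ (Term.val M v t)
  | .add t u => M.add (Term.val M v t) (Term.val M v u)
  | .mul t u => M.mul (Term.val M v t) (Term.val M v u)

/-- Satisfaction of a formula in a structure under an assignment. -/
def Formula.Realize (M : Struct) : (ℕ → M.carrier) → Formula → Prop
  | v, .eq t u => Term.val M v t = Term.val M v u
  | v, .lt t u => M.lt (Term.val M v t) (Term.val M v u)
  | v, .not φ => ¬ Formula.Realize M v φ
  | v, .and φ ψ => Formula.Realize M v φ ∧ Formula.Realize M v ψ
  | v, .or φ ψ => Formula.Realize M v φ ∨ Formula.Realize M v ψ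
  | v, .imp φ ψ => Formula.Realize M v φ → Formula.Realize M v ψ
  | v, .all i φ => ∀ a : M.carrier, Formula.Realize M (Function.update v i a) φ
  | v, .ex i φ => ∃ a : M.carrier, Formula.Realize M (Function.update v i a) φ

/-- ω : the standard model of arithmetic. -/
@[reducible] def stdModel : Struct :=
  { carrier := ℕ, zero := 0, succ := Nat.succ, add := (· + ·), mul := (· * ·),
    lt := (· < ·) }

/-- A formula is true if it holds in the standard model ω (under every assignment). -/
def IsTrue (φ : Formula) : Prop := ∀ v : ℕ → ℕ, Formula.Realize stdModel v φ

/-- The value of a (closed) term in the standard model ω. -/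
def Term.valNat (t : Term) : ℕ := Term.val stdModel (fun _ => 0) t

/-- A sentence is a formula with no free variables. -/
def Formula.IsSentence (φ : Formula) : Prop := φ.freeVars = ∅

/-- Provability from a theory; by the Gödel completeness theorem, identified with
semantic consequence. -/
def Proves (T : Set Formula) (φ : Formula) : Prop :=
  ∀ (M : Struct) (v : ℕ → M.carrier),
    (∀ ψ ∈ T, Formula.Realize M v ψ) → Formula.Realize M v φ

/-- Consistency: no formula is both provable and refutable. -/
def Consistent (T : Set Formula) : Prop :=
  ¬ ∃ φ : Formula, Proves T φ ∧ Proves T (.not φ)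

/-- The biconditional, as an abbreviation. -/
def Formula.iffF (φ ψ : Formula) : Formula := .and (.imp φ ψ) (.imp ψ φ)

def v0 : Term := .var 0
def v1 : Term := .var 1
def v2 : Term := .var 2

/-- The axioms of Robinson arithmetic Q (with < defined as usual). -/
def QAxioms : Set Formula :=
  { .all 0 (.all 1 (.imp (.eq (.succ v0) (.succ v1)) (.eq v0 v1))),
    .all 0 (.not (.eq (.succ v0) .zero)),
    .all 0 (.imp (.not (.eq v0 .zero)) (.ex 1 (.eq v0 (.succ v1)))),
    .all 0 (.eq (.add v0 .zero) v0),
    .all 0 (.all 1 (.eq (.add v0 (.succ v1)) (.succ (.add v0 v1)))),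
    .all 0 (.eq (.mul v0 .zero) .zero),
    .all 0 (.all 1 (.eq (.mul v0 (.succ v1)) (.add (.mul v0 v1) v0))),
    .all 0 (.all 1 (Formula.iffF (.lt v0 v1) (.ex 2 (.eq (.add v2 (.succ v0)) v1)))) }

/-- Pr_S : the set of Gödel numbers of sentences provable in S. -/
def PrSet (T : Set Formula) : Set ℕ :=
  {m | ∃ σ : Formula, σ.IsSentence ∧ Proves T σ ∧ m = σ.gnum}

/-- A formula μ with at most the free variable v₀ names the number i in T
if T ⊢ (∀v₀)(μ(v₀) ↔ v₀ = i). -/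
def Names (T : Set Formula) (μ : Formula) (i : ℕ) : Prop :=
  μ.freeVars ⊆ {0} ∧ Proves T (.all 0 (Formula.iffF μ (.eq v0 (numeral i))))

/-- i is named in T by some formula of length < m. -/
def Nameable (T : Set Formula) (m i : ℕ) : Prop :=
  ∃ μ : Formula, μ.length < m ∧ Names T μ i

/-- φ(v₀) defines the set A in the standard model ω. -/
def DefinesSet (φ : Formula) (A : Set ℕ) : Prop :=
  φ.freeVars ⊆ {0} ∧ ∀ i : ℕ, i ∈ A ↔ IsTrue (φ.subst 0 (numeral i))

/-- A set of natural numbers is definable (in ω). -/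
def Definable (A : Set ℕ) : Prop := ∃ φ : Formula, DefinesSet φ A

/-- φ(v₀,v₁) defines the binary relation R in the standard model ω. -/
def DefinesRel (φ : Formula) (R : ℕ → ℕ → Prop) : Prop :=
  φ.freeVars ⊆ {0, 1} ∧
    ∀ i j : ℕ, R i j ↔ IsTrue ((φ.subst 0 (numeral i)).subst 1 (numeral j))

/-- The relation B of Boolos's construction: (i,j) ∈ B iff some formula μ with at most
the free variable v₀, with ⌜μ⌝ < g(j) and |μ| < j, names i. -/
def BRel (T : Set Formula) (g : ℕ → ℕ) (i j : ℕ) : Prop :=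
  ∃ μ : Formula, μ.gnum < g j ∧ μ.length < j ∧ Names T μ i

/-- g is a recursive function bounding Gödel numbers in terms of length, as in the
construction: whenever all variables of μ are among the first j ones and |μ| < j,
we have ⌜μ⌝ < g(j). -/
def GoodBound (g : ℕ → ℕ) : Prop :=
  Computable g ∧
    ∀ (μ : Formula) (j : ℕ), μ.allVars ⊆ Finset.range j → μ.length < j → μ.gnum < g j

/-- ψ(v₀,v₁) ≔ ¬φ(v₀,v₁) ∧ (∀v₂ < v₀) φ(v₂,v₁). -/
def psiOf (φ : Formula) : Formula :=
  .and (.not φ) (.all 2 (.imp (.lt v2 v0) (φ.subst 0 v2)))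

/-- The closed term t ≔ 10·(k·k). -/
def tTerm (k : ℕ) : Term := .mul (numeral 10) (.mul (numeral k) (numeral k))

/-! ### Semantic infrastructure -/

theorem Term.val_congr {M : Struct} {v w : ℕ → M.carrier} :
    ∀ {t : Term}, (∀ i ∈ t.varsOf, v i = w i) → t.val M v = t.val M w := by
  intro t
  induction t with
  | var i => intro h; exact h i (by simp [Term.varsOf])
  | zero => intro _; rfl
  | succ t ih => intro h; simp only [Term.val]; rw [ih h]
  | add t u iht ihu =>
      intro h; simp only [Term.val]
      rw [iht fun i hi => h i (by simp [Term.varsOf, hi]),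
        ihu fun i hi => h i (by simp [Term.varsOf, hi])]
  | mul t u iht ihu =>
      intro h; simp only [Term.val]
      rw [iht fun i hi => h i (by simp [Term.varsOf, hi]),
        ihu fun i hi => h i (by simp [Term.varsOf, hi])]

theorem Formula.realize_congr {M : Struct} :
    ∀ {φ : Formula} {v w : ℕ → M.carrier}, (∀ i ∈ φ.freeVars, v i = w i) →
      (Formula.Realize M v φ ↔ Formula.Realize M w φ) := by
  intro φ
  induction φ with
  | eq t u =>
      intro v w h
      simp only [Formula.Realize]
      rw [Term.val_congr fun i hi => h i (by simp [Formula.freeVars, hi]),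
        Term.val_congr (t := u) fun i hi => h i (by simp [Formula.freeVars, hi])]
  | lt t u =>
      intro v w h
      simp only [Formula.Realize]
      rw [Term.val_congr fun i hi => h i (by simp [Formula.freeVars, hi]),
        Term.val_congr (t := u) fun i hi => h i (by simp [Formula.freeVars, hi])]
  | not φ ih =>
      intro v w h; simp only [Formula.Realize]
      rw [ih fun i hi => h i (by simpa [Formula.freeVars] using hi)]
  | and φ ψ ihφ ihψ =>
      intro v w h; simp only [Formula.Realize]
      rw [ihφ fun i hi => h i (by simp [Formula.freeVars, hi]),
        ihψ fun i hi => h i (by simp [Formula.freeVars, hi])]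
  | or φ ψ ihφ ihψ =>
      intro v w h; simp only [Formula.Realize]
      rw [ihφ fun i hi => h i (by simp [Formula.freeVars, hi]),
        ihψ fun i hi => h i (by simp [Formula.freeVars, hi])]
  | imp φ ψ ihφ ihψ =>
      intro v w h; simp only [Formula.Realize]
      rw [ihφ fun i hi => h i (by simp [Formula.freeVars, hi]),
        ihψ fun i hi => h i (by simp [Formula.freeVars, hi])]
  | all j φ ih =>
      intro v w h; simp only [Formula.Realize]
      refine forall_congr' fun a => ih fun i hi => ?_
      rcases eq_or_ne i j with rfl | hij
      · simp
      · simp only [Function.update_of_ne hij]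
        exact h i (by simp [Formula.freeVars, Finset.mem_erase, hij, hi])
  | ex j φ ih =>
      intro v w h; simp only [Formula.Realize]
      refine exists_congr fun a => ih fun i hi => ?_
      rcases eq_or_ne i j with rfl | hij
      · simp
      · simp only [Function.update_of_ne hij]
        exact h i (by simp [Formula.freeVars, Finset.mem_erase, hij, hi])

theorem Term.val_subst {M : Struct} {x : ℕ} {s : Term} :
    ∀ {t : Term} {v : ℕ → M.carrier},
      (t.subst x s).val M v = t.val M (Function.update v x (s.val M v)) := by
  intro t
  induction t with
  | var i =>
      intro v
      rcases eq_or_ne i x with rfl | h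
      · simp [Term.subst, Term.val]
      · simp [Term.subst, Term.val, h, Function.update_of_ne h]
  | zero => intro v; rfl
  | succ t ih => intro v; simp [Term.subst, Term.val, ih]
  | add t u iht ihu => intro v; simp [Term.subst, Term.val, iht, ihu]
  | mul t u iht ihu => intro v; simp [Term.subst, Term.val, iht, ihu]

theorem Term.varsOf_subst {x : ℕ} {s : Term} :
    ∀ {t : Term}, (t.subst x s).varsOf ⊆ t.varsOf.erase x ∪ s.varsOf := by
  intro t
  induction t with
  | var i =>
      rcases eq_or_ne i x with rfl | h
      · simp [Term.subst]
      · simp [Term.subst, h, Term.varsOf]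
  | zero => simp [Term.subst, Term.varsOf]
  | succ t ih => simpa [Term.subst, Term.varsOf] using ih
  | add t u iht ihu =>
      simp only [Term.subst, Term.varsOf]
      intro j hj
      rcases Finset.mem_union.1 hj with hj | hj
      · rcases Finset.mem_union.1 (iht hj) with h | h
        · simp at h; simp [h.1, h.2]
        · simp [h]
      · rcases Finset.mem_union.1 (ihu hj) with h | h
        · simp at h; simp [h.1, h.2]
        · simp [h]
  | mul t u iht ihu =>
      simp only [Term.subst, Term.varsOf]
      intro j hj
      rcases Finset.mem_union.1 hj with hj | hj
      · rcases Finset.mem_union.1 (iht hj) with h | h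
        · simp at h; simp [h.1, h.2]
        · simp [h]
      · rcases Finset.mem_union.1 (ihu hj) with h | h
        · simp at h; simp [h.1, h.2]
        · simp [h]

theorem Formula.freeVars_subst {x : ℕ} {s : Term} :
    ∀ {φ : Formula}, (φ.subst x s).freeVars ⊆ φ.freeVars.erase x ∪ s.varsOf := by
  intro φ
  induction φ with
  | eq t u =>
      simp only [Formula.subst, Formula.freeVars]
      intro j hj
      rcases Finset.mem_union.1 hj with hj | hj
      · rcases Finset.mem_union.1 (Term.varsOf_subst hj) with h | h
        · simp at h; simp [h.1, h.2]
        · simp [h]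
      · rcases Finset.mem_union.1 (Term.varsOf_subst hj) with h | h
        · simp at h; simp [h.1, h.2]
        · simp [h]
  | lt t u =>
      simp only [Formula.subst, Formula.freeVars]
      intro j hj
      rcases Finset.mem_union.1 hj with hj | hj
      · rcases Finset.mem_union.1 (Term.varsOf_subst hj) with h | h
        · simp at h; simp [h.1, h.2]
        · simp [h]
      · rcases Finset.mem_union.1 (Term.varsOf_subst hj) with h | h
        · simp at h; simp [h.1, h.2]
        · simp [h]
  | not φ ih => simpa [Formula.subst, Formula.freeVars] using ih
  | and φ ψ ihφ ihψ =>
      simp only [Formula.subst, Formula.freeVars]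
      intro j hj
      rcases Finset.mem_union.1 hj with hj | hj
      · rcases Finset.mem_union.1 (ihφ hj) with h | h
        · simp at h; simp [h.1, h.2]
        · simp [h]
      · rcases Finset.mem_union.1 (ihψ hj) with h | h
        · simp at h; simp [h.1, h.2]
        · simp [h]
  | or φ ψ ihφ ihψ =>
      simp only [Formula.subst, Formula.freeVars]
      intro j hj
      rcases Finset.mem_union.1 hj with hj | hj
      · rcases Finset.mem_union.1 (ihφ hj) with h | h
        · simp at h; simp [h.1, h.2]
        · simp [h]
      · rcases Finset.mem_union.1 (ihψ hj) with h | h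
        · simp at h; simp [h.1, h.2]
        · simp [h]
  | imp φ ψ ihφ ihψ =>
      simp only [Formula.subst, Formula.freeVars]
      intro j hj
      rcases Finset.mem_union.1 hj with hj | hj
      · rcases Finset.mem_union.1 (ihφ hj) with h | h
        · simp at h; simp [h.1, h.2]
        · simp [h]
      · rcases Finset.mem_union.1 (ihψ hj) with h | h
        · simp at h; simp [h.1, h.2]
        · simp [h]
  | all i φ ih =>
      rcases eq_or_ne i x with rfl | h
      · simp only [Formula.subst, if_pos rfl, ↓reduceIte]
        intro j hj
        simp only [Formula.freeVars, Finset.mem_erase] at hj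
        simp [Formula.freeVars, hj.1, hj.2]
      · simp only [Formula.subst, if_neg h]
        intro j hj
        simp only [Formula.freeVars, Finset.mem_erase] at hj
        rcases Finset.mem_union.1 (ih hj.2) with h2 | h2
        · simp at h2
          simp [Formula.freeVars, Finset.mem_erase, h2.1, h2.2, hj.1]
        · simp [h2]
  | ex i φ ih =>
      rcases eq_or_ne i x with rfl | h
      · simp only [Formula.subst, if_pos rfl, ↓reduceIte]
        intro j hj
        simp only [Formula.freeVars, Finset.mem_erase] at hj
        simp [Formula.freeVars, hj.1, hj.2]
      · simp only [Formula.subst, if_neg h]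
        intro j hj
        simp only [Formula.freeVars, Finset.mem_erase] at hj
        rcases Finset.mem_union.1 (ih hj.2) with h2 | h2
        · simp at h2
          simp [Formula.freeVars, Finset.mem_erase, h2.1, h2.2, hj.1]
        · simp [h2]

/-- Capture-free substitution lemma. -/
theorem Formula.realize_subst {M : Struct} {x : ℕ} {s : Term} :
    ∀ {φ : Formula} {v : ℕ → M.carrier}, (∀ y ∈ s.varsOf, y ∉ φ.allVars) →
      (Formula.Realize M v (φ.subst x s) ↔
        Formula.Realize M (Function.update v x (s.val M v)) φ) := by
  intro φ
  induction φ with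
  | eq t u =>
      intro v _
      simp [Formula.subst, Formula.Realize, Term.val_subst]
  | lt t u =>
      intro v _
      simp [Formula.subst, Formula.Realize, Term.val_subst]
  | not φ ih =>
      intro v h
      simp only [Formula.subst, Formula.Realize]
      rw [ih h]
  | and φ ψ ihφ ihψ =>
      intro v h
      simp only [Formula.subst, Formula.Realize]
      rw [ihφ fun y hy => fun hc => h y hy (by simp [Formula.allVars, hc]),
        ihψ fun y hy => fun hc => h y hy (by simp [Formula.allVars, hc])]
  | or φ ψ ihφ ihψ =>
      intro v h
      simp only [Formula.subst, Formula.Realize]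
      rw [ihφ fun y hy => fun hc => h y hy (by simp [Formula.allVars, hc]),
        ihψ fun y hy => fun hc => h y hy (by simp [Formula.allVars, hc])]
  | imp φ ψ ihφ ihψ =>
      intro v h
      simp only [Formula.subst, Formula.Realize]
      rw [ihφ fun y hy => fun hc => h y hy (by simp [Formula.allVars, hc]),
        ihψ fun y hy => fun hc => h y hy (by simp [Formula.allVars, hc])]
  | all i φ ih =>
      intro v h
      rcases eq_or_ne i x with rfl | hix
      · simp only [Formula.subst, if_pos rfl, Formula.Realize]
        refine forall_congr' fun a => ?_
        rw [Function.update_idem]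
      · simp only [Formula.subst, if_neg hix, Formula.Realize]
        refine forall_congr' fun a => ?_
        rw [ih fun y hy => fun hc => h y hy (by simp [Formula.allVars, hc])]
        have hval : s.val M (Function.update v i a) = s.val M v := by
          refine Term.val_congr fun y hy => ?_
          have : y ≠ i := by
            intro rfl'; subst rfl'
            exact h y hy (by simp [Formula.allVars])
          exact Function.update_of_ne this _ _
        rw [hval, Function.update_comm hix]
  | ex i φ ih =>
      intro v h
      rcases eq_or_ne i x with rfl | hix
      · simp only [Formula.subst, if_pos rfl, Formula.Realize]
        refine exists_congr fun a => ?_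
        rw [Function.update_idem]
      · simp only [Formula.subst, if_neg hix, Formula.Realize]
        refine exists_congr fun a => ?_
        rw [ih fun y hy => fun hc => h y hy (by simp [Formula.allVars, hc])]
        have hval : s.val M (Function.update v i a) = s.val M v := by
          refine Term.val_congr fun y hy => ?_
          have : y ≠ i := by
            intro rfl'; subst rfl'
            exact h y hy (by simp [Formula.allVars])
          exact Function.update_of_ne this _ _
        rw [hval, Function.update_comm hix]

theorem numeral_varsOf : ∀ n : ℕ, (numeral n).varsOf = ∅ := by
  intro n; induction n with
  | zero => rfl
  | succ n ih => simp [numeral, Term.varsOf, ih]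

theorem numeral_val (v : ℕ → ℕ) : ∀ n : ℕ, (numeral n).val stdModel v = n := by
  intro n; induction n with
  | zero => rfl
  | succ n ih => simp [numeral, Term.val, ih]

theorem Term.code_injective : Function.Injective Term.code := by
  intro t
  induction t with
  | var i => intro u h; cases u <;> simp [Term.code, Nat.pair_eq_pair] at h <;> simp [h]
  | zero => intro u h; cases u <;> simp [Term.code, Nat.pair_eq_pair] at h; rfl
  | succ t ih =>
      intro u h; cases u <;> simp [Term.code, Nat.pair_eq_pair] at h
      rw [ih h]
  | add t₁ t₂ ih₁ ih₂ =>
      intro u h; cases u <;> simp [Term.code, Nat.pair_eq_pair] at h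
      rw [ih₁ h.1, ih₂ h.2]
  | mul t₁ t₂ ih₁ ih₂ =>
      intro u h; cases u <;> simp [Term.code, Nat.pair_eq_pair] at h
      rw [ih₁ h.1, ih₂ h.2]

theorem Formula.gnum_injective : Function.Injective Formula.gnum := by
  intro φ
  induction φ with
  | eq t u =>
      intro ψ h; cases ψ <;> simp [Formula.gnum, Nat.pair_eq_pair] at h
      rw [Term.code_injective h.1, Term.code_injective h.2]
  | lt t u =>
      intro ψ h; cases ψ <;> simp [Formula.gnum, Nat.pair_eq_pair] at h
      rw [Term.code_injective h.1, Term.code_injective h.2]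
  | not φ ih =>
      intro ψ h; cases ψ <;> simp [Formula.gnum, Nat.pair_eq_pair] at h
      rw [ih h]
  | and φ₁ φ₂ ih₁ ih₂ =>
      intro ψ h; cases ψ <;> simp [Formula.gnum, Nat.pair_eq_pair] at h
      rw [ih₁ h.1, ih₂ h.2]
  | or φ₁ φ₂ ih₁ ih₂ =>
      intro ψ h; cases ψ <;> simp [Formula.gnum, Nat.pair_eq_pair] at h
      rw [ih₁ h.1, ih₂ h.2]
  | imp φ₁ φ₂ ih₁ ih₂ =>
      intro ψ h; cases ψ <;> simp [Formula.gnum, Nat.pair_eq_pair] at h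
      rw [ih₁ h.1, ih₂ h.2]
  | all i φ ih =>
      intro ψ h; cases ψ <;> simp [Formula.gnum, Nat.pair_eq_pair] at h
      rw [h.1, ih h.2]
  | ex i φ ih =>
      intro ψ h; cases ψ <;> simp [Formula.gnum, Nat.pair_eq_pair] at h
      rw [h.1, ih h.2]
/-! ### Definability framework -/

/-- A predicate on assignments is defined by a formula with free variables in `S`. -/
def Defd (S : Finset ℕ) (P : (ℕ → ℕ) → Prop) : Prop :=
  ∃ φ : Formula, φ.freeVars ⊆ S ∧ ∀ v : ℕ → ℕ, Formula.Realize stdModel v φ ↔ P v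

/-- A function on assignments is computed by a term with variables in `S`. -/
def TermD (S : Finset ℕ) (f : (ℕ → ℕ) → ℕ) : Prop :=
  ∃ t : Term, t.varsOf ⊆ S ∧ ∀ v : ℕ → ℕ, t.val stdModel v = f v

theorem TermD.var {S : Finset ℕ} {i : ℕ} (h : i ∈ S) : TermD S fun v => v i :=
  ⟨.var i, by simp [Term.varsOf, h], fun v => rfl⟩

theorem TermD.const (S : Finset ℕ) (n : ℕ) : TermD S fun _ => n :=
  ⟨numeral n, by simp [numeral_varsOf], fun v => numeral_val v n⟩

theorem TermD.add {S f g} (hf : TermD S f) (hg : TermD S g) :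
    TermD S fun v => f v + g v := by
  obtain ⟨t, ht, hvt⟩ := hf; obtain ⟨u, hu, hvu⟩ := hg
  exact ⟨.add t u, by simp only [Term.varsOf]; exact Finset.union_subset ht hu,
    fun v => by simp [Term.val, hvt, hvu]⟩

theorem TermD.mul {S f g} (hf : TermD S f) (hg : TermD S g) :
    TermD S fun v => f v * g v := by
  obtain ⟨t, ht, hvt⟩ := hf; obtain ⟨u, hu, hvu⟩ := hg
  exact ⟨.mul t u, by simp only [Term.varsOf]; exact Finset.union_subset ht hu,
    fun v => by simp [Term.val, hvt, hvu]⟩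

theorem Defd.congr {S P Q} (h : Defd S P) (hpq : ∀ v, P v ↔ Q v) : Defd S Q := by
  obtain ⟨φ, h1, h2⟩ := h
  exact ⟨φ, h1, fun v => (h2 v).trans (hpq v)⟩

theorem Defd.mono {S S' P} (h : Defd S P) (hs : S ⊆ S') : Defd S' P := by
  obtain ⟨φ, h1, h2⟩ := h
  exact ⟨φ, h1.trans hs, h2⟩

theorem Defd.eq {S f g} (hf : TermD S f) (hg : TermD S g) :
    Defd S fun v => f v = g v := by
  obtain ⟨t, ht, hvt⟩ := hf; obtain ⟨u, hu, hvu⟩ := hg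
  exact ⟨.eq t u, by simp only [Formula.freeVars]; exact Finset.union_subset ht hu,
    fun v => by simp [Formula.Realize, hvt, hvu]⟩

theorem Defd.lt {S f g} (hf : TermD S f) (hg : TermD S g) :
    Defd S fun v => f v < g v := by
  obtain ⟨t, ht, hvt⟩ := hf; obtain ⟨u, hu, hvu⟩ := hg
  exact ⟨.lt t u, by simp only [Formula.freeVars]; exact Finset.union_subset ht hu,
    fun v => by simp [Formula.Realize, hvt, hvu]⟩

theorem Defd.le {S f g} (hf : TermD S f) (hg : TermD S g) :
    Defd S fun v => f v ≤ g v :=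
  (Defd.lt hf (hg.add (TermD.const S 1))).congr fun v => by omega

theorem Defd.not {S P} (h : Defd S P) : Defd S fun v => ¬ P v := by
  obtain ⟨φ, h1, h2⟩ := h
  exact ⟨.not φ, by simpa [Formula.freeVars] using h1,
    fun v => by simp [Formula.Realize, h2]⟩

theorem Defd.and {S P Q} (hP : Defd S P) (hQ : Defd S Q) :
    Defd S fun v => P v ∧ Q v := by
  obtain ⟨φ, h1, h2⟩ := hP; obtain ⟨ψ, h3, h4⟩ := hQ
  exact ⟨.and φ ψ, by simp only [Formula.freeVars]; exact Finset.union_subset h1 h3,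
    fun v => by simp [Formula.Realize, h2, h4]⟩

theorem Defd.or {S P Q} (hP : Defd S P) (hQ : Defd S Q) :
    Defd S fun v => P v ∨ Q v := by
  obtain ⟨φ, h1, h2⟩ := hP; obtain ⟨ψ, h3, h4⟩ := hQ
  exact ⟨.or φ ψ, by simp only [Formula.freeVars]; exact Finset.union_subset h1 h3,
    fun v => by simp [Formula.Realize, h2, h4]⟩

theorem Defd.imp {S P Q} (hP : Defd S P) (hQ : Defd S Q) :
    Defd S fun v => P v → Q v := by
  obtain ⟨φ, h1, h2⟩ := hP; obtain ⟨ψ, h3, h4⟩ := hQ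
  exact ⟨.imp φ ψ, by simp only [Formula.freeVars]; exact Finset.union_subset h1 h3,
    fun v => by simp [Formula.Realize, h2, h4]⟩

theorem Defd.ex {S P} (i : ℕ) (h : Defd S P) :
    Defd (S.erase i) fun v => ∃ a : ℕ, P (Function.update v i a) := by
  obtain ⟨φ, h1, h2⟩ := h
  refine ⟨.ex i φ, ?_, fun v => by simp [Formula.Realize, h2]⟩
  simp only [Formula.freeVars]
  exact Finset.erase_subset_erase _ h1

theorem Defd.all {S P} (i : ℕ) (h : Defd S P) :
    Defd (S.erase i) fun v => ∀ a : ℕ, P (Function.update v i a) := by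
  obtain ⟨φ, h1, h2⟩ := h
  refine ⟨.all i φ, ?_, fun v => by simp [Formula.Realize, h2]⟩
  simp only [Formula.freeVars]
  exact Finset.erase_subset_erase _ h1

/-- Substituting a constant for a variable. -/
theorem Defd.substConst {S P} (i : ℕ) (n : ℕ) (h : Defd S P) :
    Defd (S.erase i) fun v => P (Function.update v i n) := by
  obtain ⟨φ, h1, h2⟩ := h
  refine ⟨φ.subst i (numeral n), ?_, fun v => ?_⟩
  · refine (Formula.freeVars_subst).trans ?_
    simp [numeral_varsOf]
    exact Finset.erase_subset_erase _ h1
  · rw [Formula.realize_subst (by simp [numeral_varsOf])]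
    rw [numeral_val, h2]

/-! ### Renaming of variables -/

def Term.ren (f : ℕ → ℕ) : Term → Term
  | .var i => .var (f i)
  | .zero => .zero
  | .succ t => .succ (t.ren f)
  | .add t u => .add (t.ren f) (u.ren f)
  | .mul t u => .mul (t.ren f) (u.ren f)

def Formula.ren (f : ℕ → ℕ) : Formula → Formula
  | .eq t u => .eq (t.ren f) (u.ren f)
  | .lt t u => .lt (t.ren f) (u.ren f)
  | .not φ => .not (φ.ren f)
  | .and φ ψ => .and (φ.ren f) (ψ.ren f)
  | .or φ ψ => .or (φ.ren f) (ψ.ren f)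
  | .imp φ ψ => .imp (φ.ren f) (ψ.ren f)
  | .all i φ => .all (f i) (φ.ren f)
  | .ex i φ => .ex (f i) (φ.ren f)

theorem Term.varsOf_ren {f : ℕ → ℕ} : ∀ {t : Term}, (t.ren f).varsOf ⊆ t.varsOf.image f := by
  intro t
  induction t with
  | var i => simp [Term.ren, Term.varsOf]
  | zero => simp [Term.ren, Term.varsOf]
  | succ t ih => simpa [Term.ren, Term.varsOf] using ih
  | add t u iht ihu =>
      simp only [Term.ren, Term.varsOf, Finset.image_union]
      exact Finset.union_subset (iht.trans Finset.subset_union_left)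
        (ihu.trans Finset.subset_union_right)
  | mul t u iht ihu =>
      simp only [Term.ren, Term.varsOf, Finset.image_union]
      exact Finset.union_subset (iht.trans Finset.subset_union_left)
        (ihu.trans Finset.subset_union_right)

theorem Term.val_ren {M : Struct} {f : ℕ → ℕ} :
    ∀ {t : Term} {v : ℕ → M.carrier}, (t.ren f).val M v = t.val M (v ∘ f) := by
  intro t
  induction t with
  | var i => intro v; rfl
  | zero => intro v; rfl
  | succ t ih => intro v; simp [Term.ren, Term.val, ih]
  | add t u iht ihu => intro v; simp [Term.ren, Term.val, iht, ihu]
  | mul t u iht ihu => intro v; simp [Term.ren, Term.val, iht, ihu]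

theorem Formula.freeVars_ren {f : ℕ → ℕ} (hf : Function.Injective f) :
    ∀ {φ : Formula}, (φ.ren f).freeVars ⊆ φ.freeVars.image f := by
  intro φ
  induction φ with
  | eq t u =>
      simp only [Formula.ren, Formula.freeVars, Finset.image_union]
      exact Finset.union_subset (Term.varsOf_ren.trans Finset.subset_union_left)
        (Term.varsOf_ren.trans Finset.subset_union_right)
  | lt t u =>
      simp only [Formula.ren, Formula.freeVars, Finset.image_union]
      exact Finset.union_subset (Term.varsOf_ren.trans Finset.subset_union_left)
        (Term.varsOf_ren.trans Finset.subset_union_right)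
  | not φ ih => simpa [Formula.ren, Formula.freeVars] using ih
  | and φ ψ ihφ ihψ =>
      simp only [Formula.ren, Formula.freeVars, Finset.image_union]
      exact Finset.union_subset (ihφ.trans Finset.subset_union_left)
        (ihψ.trans Finset.subset_union_right)
  | or φ ψ ihφ ihψ =>
      simp only [Formula.ren, Formula.freeVars, Finset.image_union]
      exact Finset.union_subset (ihφ.trans Finset.subset_union_left)
        (ihψ.trans Finset.subset_union_right)
  | imp φ ψ ihφ ihψ =>
      simp only [Formula.ren, Formula.freeVars, Finset.image_union]
      exact Finset.union_subset (ihφ.trans Finset.subset_union_left)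
        (ihψ.trans Finset.subset_union_right)
  | all i φ ih =>
      simp only [Formula.ren, Formula.freeVars]
      intro j hj
      simp only [Finset.mem_erase] at hj
      obtain ⟨k, hk, rfl⟩ := Finset.mem_image.1 (ih hj.2)
      refine Finset.mem_image.2 ⟨k, ?_, rfl⟩
      exact Finset.mem_erase.2 ⟨fun hki => hj.1 (by rw [hki]), hk⟩
  | ex i φ ih =>
      simp only [Formula.ren, Formula.freeVars]
      intro j hj
      simp only [Finset.mem_erase] at hj
      obtain ⟨k, hk, rfl⟩ := Finset.mem_image.1 (ih hj.2)
      refine Finset.mem_image.2 ⟨k, ?_, rfl⟩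
      exact Finset.mem_erase.2 ⟨fun hki => hj.1 (by rw [hki]), hk⟩

theorem Formula.realize_ren {M : Struct} {f : ℕ → ℕ} (hf : Function.Injective f) :
    ∀ {φ : Formula} {v : ℕ → M.carrier},
      Formula.Realize M v (φ.ren f) ↔ Formula.Realize M (v ∘ f) φ := by
  intro φ
  induction φ with
  | eq t u => intro v; simp [Formula.ren, Formula.Realize, Term.val_ren]
  | lt t u => intro v; simp [Formula.ren, Formula.Realize, Term.val_ren]
  | not φ ih => intro v; simp [Formula.ren, Formula.Realize, ih]
  | and φ ψ ihφ ihψ => intro v; simp [Formula.ren, Formula.Realize, ihφ, ihψ]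
  | or φ ψ ihφ ihψ => intro v; simp [Formula.ren, Formula.Realize, ihφ, ihψ]
  | imp φ ψ ihφ ihψ => intro v; simp [Formula.ren, Formula.Realize, ihφ, ihψ]
  | all i φ ih =>
      intro v
      simp only [Formula.ren, Formula.Realize, ih]
      refine forall_congr' fun a => ?_
      have : (Function.update v (f i) a) ∘ f = Function.update (v ∘ f) i a := by
        funext j
        rcases eq_or_ne j i with rfl | hj
        · simp [Function.comp]
        · simp [Function.comp, Function.update_of_ne hj,
            Function.update_of_ne (fun hc => hj (hf hc))]
      rw [this]
  | ex i φ ih =>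
      intro v
      simp only [Formula.ren, Formula.Realize, ih]
      refine exists_congr fun a => ?_
      have : (Function.update v (f i) a) ∘ f = Function.update (v ∘ f) i a := by
        funext j
        rcases eq_or_ne j i with rfl | hj
        · simp [Function.comp]
        · simp [Function.comp, Function.update_of_ne hj,
            Function.update_of_ne (fun hc => hj (hf hc))]
      rw [this]

theorem Defd.rename {S P} {f : ℕ → ℕ} (hf : Function.Injective f) (h : Defd S P) :
    Defd (S.image f) fun v => P (v ∘ f) := by
  obtain ⟨φ, h1, h2⟩ := h
  refine ⟨φ.ren f, (Formula.freeVars_ren hf).trans (Finset.image_subset_image h1),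
    fun v => ?_⟩
  rw [Formula.realize_ren hf, h2]
/-! ### Transport of definable relations to arbitrary variable positions -/

theorem exists_inj4 (p q r s : ℕ) (hpq : p ≠ q) (hpr : p ≠ r) (hps : p ≠ s)
    (hqr : q ≠ r) (hqs : q ≠ s) (hrs : r ≠ s) :
    ∃ f : ℕ → ℕ, Function.Injective f ∧ f 0 = p ∧ f 1 = q ∧ f 2 = r ∧ f 3 = s := by
  classical
  refine ⟨fun n => if n = 0 then p else if n = 1 then q else if n = 2 then r
    else if n = 3 then s else n + (p + q + r + s) + 1, ?_, by simp, by simp, by simp, by simp⟩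
  intro a b hab
  by_contra hne
  simp only at hab
  split_ifs at hab <;> omega

theorem Defd.of2 {R : ℕ → ℕ → Prop} (h : Defd {0, 1} fun v => R (v 0) (v 1))
    {p q : ℕ} (hpq : p ≠ q) : Defd {p, q} fun v => R (v p) (v q) := by
  obtain ⟨f, hf, h0, h1, _, _⟩ := exists_inj4 p q (p + q + 1) (p + q + 2)
    hpq (by omega) (by omega) (by omega) (by omega) (by omega)
  refine Defd.congr ((h.rename hf).mono ?_) (fun v => by simp [Function.comp, h0, h1])
  intro x hx
  simp only [Finset.mem_image, Finset.mem_insert, Finset.mem_singleton] at hx ⊢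
  obtain ⟨y, hy, rfl⟩ := hx
  rcases hy with rfl | rfl
  · exact Or.inl h0
  · exact Or.inr h1

theorem Defd.of3 {R : ℕ → ℕ → ℕ → Prop} (h : Defd {0, 1, 2} fun v => R (v 0) (v 1) (v 2))
    {p q r : ℕ} (hpq : p ≠ q) (hpr : p ≠ r) (hqr : q ≠ r) :
    Defd {p, q, r} fun v => R (v p) (v q) (v r) := by
  obtain ⟨f, hf, h0, h1, h2, _⟩ := exists_inj4 p q r (p + q + r + 1)
    hpq hpr (by omega) hqr (by omega) (by omega)
  refine Defd.congr ((h.rename hf).mono ?_) (fun v => by simp [Function.comp, h0, h1, h2])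
  intro x hx
  simp only [Finset.mem_image, Finset.mem_insert, Finset.mem_singleton] at hx ⊢
  obtain ⟨y, hy, rfl⟩ := hx
  rcases hy with rfl | rfl | rfl
  · exact Or.inl h0
  · exact Or.inr (Or.inl h1)
  · exact Or.inr (Or.inr h2)

theorem Defd.of4 {R : ℕ → ℕ → ℕ → ℕ → Prop}
    (h : Defd {0, 1, 2, 3} fun v => R (v 0) (v 1) (v 2) (v 3))
    {p q r s : ℕ} (hpq : p ≠ q) (hpr : p ≠ r) (hps : p ≠ s) (hqr : q ≠ r)
    (hqs : q ≠ s) (hrs : r ≠ s) :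
    Defd {p, q, r, s} fun v => R (v p) (v q) (v r) (v s) := by
  obtain ⟨f, hf, h0, h1, h2, h3⟩ := exists_inj4 p q r s hpq hpr hps hqr hqs hrs
  refine Defd.congr ((h.rename hf).mono ?_) (fun v => by simp [Function.comp, h0, h1, h2, h3])
  intro x hx
  simp only [Finset.mem_image, Finset.mem_insert, Finset.mem_singleton] at hx ⊢
  obtain ⟨y, hy, rfl⟩ := hx
  rcases hy with rfl | rfl | rfl | rfl
  · exact Or.inl h0
  · exact Or.inr (Or.inl h1)
  · exact Or.inr (Or.inr (Or.inl h2))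
  · exact Or.inr (Or.inr (Or.inr h3))

/-! ### Arithmetic atoms: pairing, mod, Gödel beta -/

theorem defd_pair : Defd {0, 1, 2} fun v => Nat.pair (v 0) (v 1) = v 2 := by
  have h0 : TermD {0, 1, 2} fun v => v 0 := TermD.var (by simp)
  have h1 : TermD {0, 1, 2} fun v => v 1 := TermD.var (by simp)
  have h2 : TermD {0, 1, 2} fun v => v 2 := TermD.var (by simp)
  have hd : Defd {0, 1, 2} fun v =>
      (v 0 < v 1 ∧ v 1 * v 1 + v 0 = v 2) ∨ (¬ v 0 < v 1 ∧ v 0 * v 0 + v 0 + v 1 = v 2) :=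
    ((Defd.lt h0 h1).and (Defd.eq ((h1.mul h1).add h0) h2)).or
      (((Defd.lt h0 h1).not).and (Defd.eq (((h0.mul h0).add h0).add h1) h2))
  refine hd.congr fun v => ?_
  simp only [Nat.pair]
  split_ifs with h <;> simp [h] <;> omega

theorem defd_pair' {p q r : ℕ} (hpq : p ≠ q) (hpr : p ≠ r) (hqr : q ≠ r) :
    Defd {p, q, r} fun v => Nat.pair (v p) (v q) = v r :=
  Defd.of3 (R := fun a b c => Nat.pair a b = c) defd_pair hpq hpr hqr

theorem defd_mod : Defd {0, 1, 2} fun v => v 2 = v 0 % v 1 := by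
  have h0 : TermD ({0, 1, 2, 3} : Finset ℕ) fun v => v 0 := TermD.var (by simp)
  have h1 : TermD ({0, 1, 2, 3} : Finset ℕ) fun v => v 1 := TermD.var (by simp)
  have h2 : TermD ({0, 1, 2, 3} : Finset ℕ) fun v => v 2 := TermD.var (by simp)
  have h3 : TermD ({0, 1, 2, 3} : Finset ℕ) fun v => v 3 := TermD.var (by simp)
  have hq : Defd ({0, 1, 2, 3} : Finset ℕ) fun v => v 3 * v 1 + v 2 = v 0 :=
    Defd.eq ((h3.mul h1).add h2) h0
  have hex := (Defd.ex 3 hq).mono (show ({0,1,2,3} : Finset ℕ).erase 3 ⊆ {0,1,2} by decide)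
  have hex' : Defd {0, 1, 2} fun v => ∃ a, a * v 1 + v 2 = v 0 :=
    hex.congr fun v => by simp [Function.update_apply]
  have h0' : TermD ({0, 1, 2} : Finset ℕ) fun v => v 0 := TermD.var (by simp)
  have h1' : TermD ({0, 1, 2} : Finset ℕ) fun v => v 1 := TermD.var (by simp)
  have h2' : TermD ({0, 1, 2} : Finset ℕ) fun v => v 2 := TermD.var (by simp)
  have hd : Defd {0, 1, 2} fun v =>
      (v 1 = 0 ∧ v 2 = v 0) ∨ (v 2 < v 1 ∧ ∃ a, a * v 1 + v 2 = v 0) :=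
    ((Defd.eq h1' (TermD.const _ 0)).and (Defd.eq h2' h0')).or ((Defd.lt h2' h1').and hex')
  refine hd.congr fun v => ?_
  rcases eq_or_ne (v 1) 0 with h | h
  · simp [h]
  · constructor
    · rintro (⟨h1, _⟩ | ⟨hlt, q, hq⟩)
      · exact absurd h1 h
      · rw [← hq, Nat.mul_comm q (v 1), Nat.mul_add_mod, Nat.mod_eq_of_lt hlt]
    · intro hv
      refine Or.inr ⟨hv ▸ Nat.mod_lt _ (Nat.pos_of_ne_zero h), v 0 / v 1, ?_⟩
      rw [hv, Nat.mul_comm]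
      exact Nat.div_add_mod _ _

/-- Gödel's beta function. -/
def betaN (a i : ℕ) : ℕ := a.unpair.1 % (a.unpair.2 * (i + 1) + 1)

theorem defd_beta : Defd {0, 1, 2} fun v => betaN (v 0) (v 1) = v 2 := by
  -- vars: a=0, i=1, r=2, bound: p=3, b=4, m=5
  have hP : Defd ({3, 4, 0} : Finset ℕ) fun v => Nat.pair (v 3) (v 4) = v 0 :=
    defd_pair' (by omega) (by omega) (by omega)

  have hM : Defd ({0,1,2,3,4,5} : Finset ℕ) fun v => v 5 = v 4 * (v 1 + 1) + 1 :=
    Defd.eq (TermD.var (by simp))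
      (((TermD.var (S := ({0,1,2,3,4,5} : Finset ℕ)) (i := 4) (by simp)).mul
        ((TermD.var (by simp)).add (TermD.const _ 1))).add (TermD.const _ 1))
  have hR : Defd ({3, 5, 2} : Finset ℕ) fun v => v 2 = v 3 % v 5 :=
    Defd.of3 (R := fun a b c => c = a % b) defd_mod (by omega) (by omega) (by omega)
  have hAll : Defd ({0,1,2,3,4,5} : Finset ℕ) fun v =>
      (Nat.pair (v 3) (v 4) = v 0 ∧ v 5 = v 4 * (v 1 + 1) + 1) ∧ v 2 = v 3 % v 5 :=
    ((hP.mono (by decide)).and hM).and (hR.mono (by decide))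
  have hex := Defd.ex 3 (Defd.ex 4 (Defd.ex 5 hAll))
  have : Defd ((( ({0,1,2,3,4,5} : Finset ℕ).erase 5).erase 4).erase 3) fun v =>
      ∃ p b m, (Nat.pair p b = v 0 ∧ m = b * (v 1 + 1) + 1) ∧ v 2 = p % m := by
    refine hex.congr fun v => ?_
    simp [Function.update_apply]
  refine ((this.mono (by decide)).congr fun v => ?_)
  constructor
  · rintro ⟨p, b, m, ⟨hpb, rfl⟩, hr⟩
    rw [betaN, ← hpb, Nat.unpair_pair, hr]
  · intro h
    exact ⟨(v 0).unpair.1, (v 0).unpair.2, _, ⟨Nat.pair_unpair _, rfl⟩, h.symm⟩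

theorem defd_beta' {p q r : ℕ} (hpq : p ≠ q) (hpr : p ≠ r) (hqr : q ≠ r) :
    Defd {p, q, r} fun v => betaN (v p) (v q) = v r :=
  Defd.of3 (R := fun a b c => betaN a b = c) defd_beta hpq hpr hqr

/-! ### The beta-function lemma (via CRT) -/

theorem crt_family : ∀ (n : ℕ) (m r : ℕ → ℕ),
    (∀ i < n, ∀ j < n, i ≠ j → (m i).Coprime (m j)) →
    ∃ x, ∀ i < n, x ≡ r i [MOD m i] := by
  intro n
  induction n with
  | zero => exact fun m r _ => ⟨0, fun i hi => absurd hi (Nat.not_lt_zero i)⟩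
  | succ n ih =>
      intro m r hco
      obtain ⟨x, hx⟩ := ih m r (fun i hi j hj h =>
        hco i (hi.trans (Nat.lt_succ_self n)) j (hj.trans (Nat.lt_succ_self n)) h)
      have hcop : (∏ i ∈ Finset.range n, m i).Coprime (m n) := by
        refine Nat.Coprime.prod_left ?_
        intro i hi
        exact hco i (Nat.lt_succ_of_lt (Finset.mem_range.1 hi)) n (Nat.lt_succ_self n)
          (Nat.ne_of_lt (Finset.mem_range.1 hi))
      obtain ⟨k, hk1, hk2⟩ := Nat.chineseRemainder hcop x (r n)
      refine ⟨k, fun i hi => ?_⟩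
      rcases Nat.lt_succ_iff_lt_or_eq.1 hi with hi' | rfl
      · have hdvd : m i ∣ ∏ j ∈ Finset.range n, m j :=
          Finset.dvd_prod_of_mem m (Finset.mem_range.2 hi')
        exact (Nat.ModEq.of_dvd hdvd hk1).trans (hx i hi')
      · exact hk2

theorem beta_code (f : ℕ → ℕ) (N : ℕ) : ∃ a, ∀ i ≤ N, betaN a i = f i := by
  classical
  set B := (Finset.range (N + 1)).sup f with hB
  set b := (max (N + 1) (B + 1)).factorial with hb
  have hbB : B < b := by
    calc B < B + 1 := Nat.lt_succ_self B
    _ ≤ max (N + 1) (B + 1) := le_max_right _ _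
    _ ≤ b := Nat.self_le_factorial _
  have hbN : N + 1 ≤ b := (le_max_left _ _).trans (Nat.self_le_factorial _)
  set m : ℕ → ℕ := fun i => b * (i + 1) + 1 with hm
  have hco : ∀ i < N + 1, ∀ j < N + 1, i ≠ j → (m i).Coprime (m j) := by
    have key : ∀ i j, i < j → j < N + 1 → (m i).Coprime (m j) := by
      intro i j hij hj
      rw [Nat.coprime_comm]
      by_contra hne
      obtain ⟨p, hp, hpj, hpi⟩ := Nat.Prime.not_coprime_iff_dvd.1 hne
      simp only [hm] at hpi hpj
      have hmm : b * (j + 1) + 1 = (b * (i + 1) + 1) + b * (j - i) := by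
        have h2 : b * (j + 1) = b * (i + 1) + b * (j - i) := by
          rw [← Nat.mul_add]
          congr 1
          omega
        omega
      have hpd : p ∣ b * (j - i) := (Nat.dvd_add_right hpi).1 (hmm ▸ hpj)
      have hpb : ¬ p ∣ b := by
        intro hpb
        have h1 : p ∣ b * (i + 1) := hpb.mul_right _
        have : p ∣ 1 := (Nat.dvd_add_right h1).1 hpi
        have := Nat.dvd_one.1 this
        exact absurd this (Nat.Prime.one_lt hp).ne'
      have hcob : Nat.Coprime p b := (Nat.Prime.coprime_iff_not_dvd hp).2 hpb
      have hpji : p ∣ j - i := by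
        rw [Nat.mul_comm] at hpd
        exact hcob.dvd_of_dvd_mul_right hpd
      have hji : 0 < j - i := Nat.sub_pos_of_lt hij
      have hple : p ≤ j - i := Nat.le_of_dvd hji hpji
      have : p ∣ b := Nat.dvd_factorial (Nat.Prime.pos hp)
        (le_trans (by omega : p ≤ N + 1) (le_max_left _ _))
      exact hpb this
    intro i hi j hj hij
    rcases Nat.lt_or_ge i j with h | h
    · exact key i j h hj
    · exact (key j i (Nat.lt_of_le_of_ne h (Ne.symm hij)) hi).symm
  obtain ⟨x, hx⟩ := crt_family (N + 1) m f hco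
  refine ⟨Nat.pair x b, fun i hi => ?_⟩
  have hfi : f i < m i := by
    have h1 : f i ≤ B := Finset.le_sup (Finset.mem_range.2 (Nat.lt_succ_of_le hi))
    have : b ≤ b * (i + 1) := Nat.le_mul_of_pos_right b (Nat.succ_pos i)
    simp only [hm]
    omega
  have := hx i (Nat.lt_succ_of_le hi)
  rw [betaN, Nat.unpair_pair]
  simp only
  rw [← Nat.mod_eq_of_lt hfi]
  exact this
/-! ### Arithmetization of substitution -/

theorem lt_pair_of_pos {k w : ℕ} (h : 0 < k) : w < Nat.pair k w := by
  rw [Nat.pair]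
  split_ifs with hkw
  · have : w * 2 ≤ w * w := Nat.mul_le_mul_left w (by omega)
    omega
  · omega

theorem unpair2_lt {x : ℕ} (h : x.unpair.1 ≠ 0) : x.unpair.2 < x := by
  conv_rhs => rw [← Nat.pair_unpair x]
  exact lt_pair_of_pos (Nat.pos_of_ne_zero h)

/-- One step of substitution on term codes; `s` is the code being substituted for `v₀`,
`g` gives the values at smaller codes. -/
def TStep (s : ℕ) (g : ℕ → ℕ) (x : ℕ) : ℕ :=
  if x.unpair.1 = 0 then (if x.unpair.2 = 0 then s else x)
  else if x.unpair.1 = 2 then Nat.pair 2 (g x.unpair.2)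
  else if x.unpair.1 = 3 ∨ x.unpair.1 = 4 then
    Nat.pair x.unpair.1 (Nat.pair (g x.unpair.2.unpair.1) (g x.unpair.2.unpair.2))
  else x

/-- Substitution on term codes. -/
def tsubN (s : ℕ) (x : ℕ) : ℕ :=
  TStep s (fun y => if h : y < x then tsubN s y else 0) x
termination_by x
decreasing_by exact h

/-- One step of substitution on formula codes. -/
def FStep (s : ℕ) (tg g : ℕ → ℕ) (x : ℕ) : ℕ :=
  if x.unpair.1 = 0 ∨ x.unpair.1 = 1 then
    Nat.pair x.unpair.1 (Nat.pair (tg x.unpair.2.unpair.1) (tg x.unpair.2.unpair.2))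
  else if x.unpair.1 = 2 then Nat.pair 2 (g x.unpair.2)
  else if x.unpair.1 = 3 ∨ x.unpair.1 = 4 ∨ x.unpair.1 = 5 then
    Nat.pair x.unpair.1 (Nat.pair (g x.unpair.2.unpair.1) (g x.unpair.2.unpair.2))
  else if x.unpair.1 = 6 ∨ x.unpair.1 = 7 then
    (if x.unpair.2.unpair.1 = 0 then x else
      Nat.pair x.unpair.1 (Nat.pair x.unpair.2.unpair.1 (g x.unpair.2.unpair.2)))
  else x

/-- Substitution on formula codes. -/
def fsubN (s : ℕ) (x : ℕ) : ℕ :=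
  FStep s (tsubN s) (fun y => if h : y < x then fsubN s y else 0) x
termination_by x
decreasing_by exact h

theorem TStep_congr {s : ℕ} {g g' : ℕ → ℕ} {x : ℕ} (h : ∀ y < x, g y = g' y) :
    TStep s g x = TStep s g' x := by
  unfold TStep
  split_ifs with h1 h2 h3 h4
  · rfl
  · rfl
  · rw [h _ (unpair2_lt h1)]
  · have hw : x.unpair.2 < x := unpair2_lt h1
    rw [h _ (lt_of_le_of_lt (Nat.unpair_left_le _) hw),
      h _ (lt_of_le_of_lt (Nat.unpair_right_le _) hw)]
  · rfl

theorem FStep_congr {s : ℕ} {tg tg' g g' : ℕ → ℕ} {x : ℕ}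
    (ht : ∀ y ≤ x, tg y = tg' y) (h : ∀ y < x, g y = g' y) :
    FStep s tg g x = FStep s tg' g' x := by
  unfold FStep
  have hw : x.unpair.2 ≤ x := Nat.unpair_right_le _
  split_ifs with h1 h2 h3 h4 h5
  · rw [ht _ (le_trans (Nat.unpair_left_le _) hw),
      ht _ (le_trans (Nat.unpair_right_le _) hw)]
  · have h1' : x.unpair.1 ≠ 0 := by omega
    rw [h _ (unpair2_lt h1')]
  · have h1' : x.unpair.1 ≠ 0 := by omega
    have hw' : x.unpair.2 < x := unpair2_lt h1'
    rw [h _ (lt_of_le_of_lt (Nat.unpair_left_le _) hw'),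
      h _ (lt_of_le_of_lt (Nat.unpair_right_le _) hw')]
  · rfl
  · have h1' : x.unpair.1 ≠ 0 := by omega
    have hw' : x.unpair.2 < x := unpair2_lt h1'
    rw [h _ (lt_of_le_of_lt (Nat.unpair_right_le _) hw')]
  · rfl

theorem tsubN_eq (s x : ℕ) : tsubN s x = TStep s (tsubN s) x := by
  rw [tsubN]
  exact TStep_congr fun y hy => by simp [hy]

theorem fsubN_eq (s x : ℕ) : fsubN s x = FStep s (tsubN s) (fsubN s) x := by
  rw [fsubN]
  exact FStep_congr (fun _ _ => rfl) (fun y hy => by simp [hy])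

theorem tsubN_code (u : Term) : ∀ t : Term, tsubN u.code t.code = (t.subst 0 u).code := by
  intro t
  induction t with
  | var i =>
      rw [tsubN_eq]
      rcases eq_or_ne i 0 with rfl | h
      · simp [TStep, Term.code, Term.subst, Nat.unpair_pair]
      · simp [TStep, Term.code, Term.subst, Nat.unpair_pair, h]
  | zero =>
      rw [tsubN_eq]
      simp [TStep, Term.code, Term.subst, Nat.unpair_pair]
  | succ t ih =>
      rw [tsubN_eq]
      simp [TStep, Term.code, Term.subst, Nat.unpair_pair, ih]
  | add t₁ t₂ ih₁ ih₂ =>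
      rw [tsubN_eq]
      simp [TStep, Term.code, Term.subst, Nat.unpair_pair, ih₁, ih₂]
  | mul t₁ t₂ ih₁ ih₂ =>
      rw [tsubN_eq]
      simp [TStep, Term.code, Term.subst, Nat.unpair_pair, ih₁, ih₂]

theorem fsubN_code (u : Term) : ∀ φ : Formula, fsubN u.code φ.gnum = (φ.subst 0 u).gnum := by
  intro φ
  induction φ with
  | eq t₁ t₂ =>
      rw [fsubN_eq]
      simp [FStep, Formula.gnum, Formula.subst, Nat.unpair_pair, tsubN_code]
  | lt t₁ t₂ =>
      rw [fsubN_eq]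
      simp [FStep, Formula.gnum, Formula.subst, Nat.unpair_pair, tsubN_code]
  | not φ ih =>
      rw [fsubN_eq]
      simp [FStep, Formula.gnum, Formula.subst, Nat.unpair_pair, ih]
  | and φ ψ ihφ ihψ =>
      rw [fsubN_eq]
      simp [FStep, Formula.gnum, Formula.subst, Nat.unpair_pair, ihφ, ihψ]
  | or φ ψ ihφ ihψ =>
      rw [fsubN_eq]
      simp [FStep, Formula.gnum, Formula.subst, Nat.unpair_pair, ihφ, ihψ]
  | imp φ ψ ihφ ihψ =>
      rw [fsubN_eq]
      simp [FStep, Formula.gnum, Formula.subst, Nat.unpair_pair, ihφ, ihψ]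
  | all i φ ih =>
      rw [fsubN_eq]
      rcases eq_or_ne i 0 with rfl | h
      · simp [FStep, Formula.gnum, Formula.subst, Nat.unpair_pair]
      · simp [FStep, Formula.gnum, Formula.subst, Nat.unpair_pair, h, ih]
  | ex i φ ih =>
      rw [fsubN_eq]
      rcases eq_or_ne i 0 with rfl | h
      · simp [FStep, Formula.gnum, Formula.subst, Nat.unpair_pair]
      · simp [FStep, Formula.gnum, Formula.subst, Nat.unpair_pair, h, ih]

/-- The diagonal function. -/
def dN (e : ℕ) : ℕ := fsubN (numeral e).code e

theorem dN_gnum (φ : Formula) : dN φ.gnum = (φ.subst 0 (numeral φ.gnum)).gnum :=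
  fsubN_code _ _

/-! ### Computation tables -/

theorem ttable_unique {s N : ℕ} {g : ℕ → ℕ} (hg : ∀ z ≤ N, g z = TStep s g z) :
    ∀ z ≤ N, g z = tsubN s z := by
  intro z
  induction z using Nat.strong_induction_on with
  | _ z ih =>
      intro hz
      rw [hg z hz, tsubN_eq]
      exact TStep_congr fun y hy => ih y hy (le_trans (Nat.le_of_lt hy) hz)

theorem ftable_unique {s N : ℕ} {tg g : ℕ → ℕ} (htg : ∀ z ≤ N, tg z = tsubN s z)
    (hg : ∀ z ≤ N, g z = FStep s tg g z) : ∀ z ≤ N, g z = fsubN s z := by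
  intro z
  induction z using Nat.strong_induction_on with
  | _ z ih =>
      intro hz
      rw [hg z hz, fsubN_eq]
      exact FStep_congr (fun y hy => htg y (le_trans hy hz))
        (fun y hy => ih y hy (le_trans (Nat.le_of_lt hy) hz))

theorem ntable_unique {N : ℕ} {g : ℕ → ℕ} (h0 : g 0 = Nat.pair 1 0)
    (hs : ∀ i < N, g (i + 1) = Nat.pair 2 (g i)) : ∀ i ≤ N, g i = (numeral i).code := by
  intro i
  induction i with
  | zero => intro _; exact h0
  | succ i ih =>
      intro hi
      rw [hs i (by omega), ih (by omega)]
      rfl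

/-- The graph of the diagonal function, in purely arithmetical form. -/
def DRel (e m : ℕ) : Prop :=
  ∃ c s a b : ℕ,
    ((betaN c 0 = Nat.pair 1 0 ∧ (∀ i, i < e → betaN c (i + 1) = Nat.pair 2 (betaN c i))) ∧
      betaN c e = s) ∧
    ((∀ z, z ≤ e → betaN a z = TStep s (betaN a) z) ∧
      (∀ z, z ≤ e → betaN b z = FStep s (betaN a) (betaN b) z)) ∧
    betaN b e = m

theorem DRel_iff (e m : ℕ) : DRel e m ↔ m = dN e := by
  constructor
  · rintro ⟨c, s, a, b, ⟨⟨h0, h1⟩, h2⟩, ⟨h3, h4⟩, h5⟩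
    have hc := ntable_unique h0 h1 e (le_refl e)
    have hs : s = (numeral e).code := by rw [← h2, hc]
    have ha := ttable_unique h3
    have hb := ftable_unique ha h4 e (le_refl e)
    rw [← h5, hb, hs]
    rfl
  · rintro rfl
    obtain ⟨c, hc⟩ := beta_code (fun i => (numeral i).code) e
    obtain ⟨a, ha⟩ := beta_code (tsubN (numeral e).code) e
    obtain ⟨b, hb⟩ := beta_code (fsubN (numeral e).code) e
    refine ⟨c, (numeral e).code, a, b, ⟨⟨?_, ?_⟩, ?_⟩, ⟨?_, ?_⟩, ?_⟩
    · rw [hc 0 (Nat.zero_le _)]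
      rfl
    · intro i hi
      rw [hc (i + 1) hi, hc i (by omega)]
      rfl
    · exact hc e le_rfl
    · intro z hz
      rw [ha z hz, tsubN_eq]
      exact TStep_congr fun y hy => (ha y (by omega)).symm
    · intro z hz
      rw [hb z hz, fsubN_eq]
      exact FStep_congr (fun y hy => (ha y (by omega)).symm)
        (fun y hy => (hb y (by omega)).symm)
    · exact hb e le_rfl
/-! ### Definability of the term-substitution table -/

theorem TS_iff (s z r : ℕ) (g : ℕ → ℕ) :
    (∃ k w, Nat.pair k w = z ∧
      ((k = 0 → ((w = 0 → r = s) ∧ (¬ w = 0 → r = z))) ∧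
       (k = 2 → ∃ c, g w = c ∧ Nat.pair k c = r)) ∧
      (((k = 3 ∨ k = 4) → ∃ w1 w2 c1 c2 cc, Nat.pair w1 w2 = w ∧ g w1 = c1 ∧ g w2 = c2 ∧
          Nat.pair c1 c2 = cc ∧ Nat.pair k cc = r) ∧
       ((¬ k = 0 ∧ ¬ k = 2 ∧ ¬ k = 3 ∧ ¬ k = 4) → r = z)))
    ↔ r = TStep s g z := by
  constructor
  · rintro ⟨k, w, hkw, ⟨hc0, hc2⟩, hc34, hcd⟩
    have hk : k = z.unpair.1 := by rw [← hkw, Nat.unpair_pair]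
    have hw : w = z.unpair.2 := by rw [← hkw, Nat.unpair_pair]
    subst hk; subst hw
    unfold TStep
    split_ifs with h1 h2 h3 h4
    · exact (hc0 h1).1 h2
    · exact (hc0 h1).2 h2
    · obtain ⟨c, hgc, hp⟩ := hc2 h3
      rw [← hp, hgc, h3]
    · obtain ⟨w1, w2, c1, c2, cc, hww, h1', h2', hcc, hr⟩ := hc34 h4
      have e1 : w1 = z.unpair.2.unpair.1 := by rw [← hww, Nat.unpair_pair]
      have e2 : w2 = z.unpair.2.unpair.2 := by rw [← hww, Nat.unpair_pair]
      subst e1; subst e2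
      rw [← hr, ← hcc, h1', h2']
    · exact hcd ⟨h1, h3, fun hc => h4 (Or.inl hc), fun hc => h4 (Or.inr hc)⟩
  · rintro rfl
    refine ⟨z.unpair.1, z.unpair.2, Nat.pair_unpair z, ⟨⟨?_, ?_⟩, ?_⟩⟩
    · intro h1
      constructor
      · intro h2; unfold TStep; rw [if_pos h1, if_pos h2]
      · intro h2; unfold TStep; rw [if_pos h1, if_neg h2]
    · intro h2
      have h1 : ¬ z.unpair.1 = 0 := by omega
      exact ⟨g z.unpair.2, rfl, by unfold TStep; rw [if_neg h1, if_pos h2, h2]⟩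
    constructor
    · intro h34
      have h1 : ¬ z.unpair.1 = 0 := by rcases h34 with h | h <;> omega
      have h2 : ¬ z.unpair.1 = 2 := by rcases h34 with h | h <;> omega
      exact ⟨z.unpair.2.unpair.1, z.unpair.2.unpair.2, _, _, _,
        Nat.pair_unpair _, rfl, rfl, rfl,
        by unfold TStep; rw [if_neg h1, if_neg h2, if_pos h34]⟩
    · rintro ⟨h1, h2, h3, h4⟩
      unfold TStep
      rw [if_neg h1, if_neg h2, if_neg (by tauto : ¬ (z.unpair.1 = 3 ∨ z.unpair.1 = 4))]

/-- Convenient variable atoms. -/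
theorem tdv {S : Finset ℕ} (i : ℕ) (h : i ∈ S) : TermD S fun v => v i := TermD.var h

theorem defd_TT : Defd {0, 1, 2} fun v =>
    ∀ z, z ≤ v 2 → betaN (v 0) z = TStep (v 1) (betaN (v 0)) z := by
  classical
  -- variables: a=0, s=1, N=2, z=3, r=4, k=5, w=6, then 7-11 for branches
  have hC0 : Defd ({0,1,2,3,4,5,6} : Finset ℕ) fun v =>
      v 5 = 0 → ((v 6 = 0 → v 4 = v 1) ∧ (¬ v 6 = 0 → v 4 = v 3)) := by
    refine Defd.imp (Defd.eq (tdv 5 (by decide)) (TermD.const _ 0)) ?_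
    exact (Defd.imp (Defd.eq (tdv 6 (by decide)) (TermD.const _ 0))
        (Defd.eq (tdv 4 (by decide)) (tdv 1 (by decide)))).and
      (Defd.imp (Defd.not (Defd.eq (tdv 6 (by decide)) (TermD.const _ 0)))
        (Defd.eq (tdv 4 (by decide)) (tdv 3 (by decide))))
  have hC2 : Defd ({0,1,2,3,4,5,6} : Finset ℕ) fun v =>
      v 5 = 2 → ∃ c, betaN (v 0) (v 6) = c ∧ Nat.pair (v 5) c = v 4 := by
    refine Defd.imp (Defd.eq (tdv 5 (by decide)) (TermD.const _ 2)) ?_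
    have hin : Defd ({0,1,2,3,4,5,6,7} : Finset ℕ) fun v =>
        betaN (v 0) (v 6) = v 7 ∧ Nat.pair (v 5) (v 7) = v 4 :=
      ((defd_beta' (p := 0) (q := 6) (r := 7) (by omega) (by omega) (by omega)).mono
        (by decide)).and
      ((defd_pair' (p := 5) (q := 7) (r := 4) (by omega) (by omega) (by omega)).mono
        (by decide))
    have := (Defd.ex 7 hin).mono
      (show ({0,1,2,3,4,5,6,7} : Finset ℕ).erase 7 ⊆ {0,1,2,3,4,5,6} by decide)
    exact this.congr fun v => by simp [Function.update_apply]
  have hC34 : Defd ({0,1,2,3,4,5,6} : Finset ℕ) fun v =>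
      (v 5 = 3 ∨ v 5 = 4) → ∃ w1 w2 c1 c2 cc, Nat.pair w1 w2 = v 6 ∧
        betaN (v 0) w1 = c1 ∧ betaN (v 0) w2 = c2 ∧ Nat.pair c1 c2 = cc ∧
        Nat.pair (v 5) cc = v 4 := by
    refine Defd.imp ((Defd.eq (tdv 5 (by decide)) (TermD.const _ 3)).or
      (Defd.eq (tdv 5 (by decide)) (TermD.const _ 4))) ?_
    have hin : Defd ({0,1,2,3,4,5,6,7,8,9,10,11} : Finset ℕ) fun v =>
        Nat.pair (v 7) (v 8) = v 6 ∧
        betaN (v 0) (v 7) = v 9 ∧ betaN (v 0) (v 8) = v 10 ∧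
        Nat.pair (v 9) (v 10) = v 11 ∧ Nat.pair (v 5) (v 11) = v 4 :=
      ((defd_pair' (p := 7) (q := 8) (r := 6) (by omega) (by omega) (by omega)).mono
        (by decide)).and <|
      ((defd_beta' (p := 0) (q := 7) (r := 9) (by omega) (by omega) (by omega)).mono
        (by decide)).and <|
      ((defd_beta' (p := 0) (q := 8) (r := 10) (by omega) (by omega) (by omega)).mono
        (by decide)).and <|
      ((defd_pair' (p := 9) (q := 10) (r := 11) (by omega) (by omega) (by omega)).mono
        (by decide)).and
      ((defd_pair' (p := 5) (q := 11) (r := 4) (by omega) (by omega) (by omega)).mono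
        (by decide))
    have := (Defd.ex 7 (Defd.ex 8 (Defd.ex 9 (Defd.ex 10 (Defd.ex 11 hin))))).mono
      (show ((((((({0,1,2,3,4,5,6,7,8,9,10,11} : Finset ℕ).erase 11).erase 10).erase
        9).erase 8).erase 7) : Finset ℕ) ⊆ {0,1,2,3,4,5,6} by decide)
    exact this.congr fun v => by simp [Function.update_apply]
  have hCD : Defd ({0,1,2,3,4,5,6} : Finset ℕ) fun v =>
      (¬ v 5 = 0 ∧ ¬ v 5 = 2 ∧ ¬ v 5 = 3 ∧ ¬ v 5 = 4) → v 4 = v 3 := by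
    refine Defd.imp ?_ (Defd.eq (tdv 4 (by decide)) (tdv 3 (by decide)))
    exact ((Defd.not (Defd.eq (tdv 5 (by decide)) (TermD.const _ 0))).and <|
      ((Defd.not (Defd.eq (tdv 5 (by decide)) (TermD.const _ 2))).and <|
      ((Defd.not (Defd.eq (tdv 5 (by decide)) (TermD.const _ 3))).and
       (Defd.not (Defd.eq (tdv 5 (by decide)) (TermD.const _ 4))))))
  have hKW : Defd ({0,1,2,3,4,5,6} : Finset ℕ) fun v => Nat.pair (v 5) (v 6) = v 3 :=
    (defd_pair' (p := 5) (q := 6) (r := 3) (by omega) (by omega) (by omega)).mono (by decide)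
  have hTS : Defd ({0,1,2,3,4} : Finset ℕ) fun v =>
      ∃ k w, Nat.pair k w = v 3 ∧
        ((k = 0 → ((w = 0 → v 4 = v 1) ∧ (¬ w = 0 → v 4 = v 3))) ∧
         (k = 2 → ∃ c, betaN (v 0) w = c ∧ Nat.pair k c = v 4)) ∧
        (((k = 3 ∨ k = 4) → ∃ w1 w2 c1 c2 cc, Nat.pair w1 w2 = w ∧
            betaN (v 0) w1 = c1 ∧ betaN (v 0) w2 = c2 ∧ Nat.pair c1 c2 = cc ∧
            Nat.pair k cc = v 4) ∧
         ((¬ k = 0 ∧ ¬ k = 2 ∧ ¬ k = 3 ∧ ¬ k = 4) → v 4 = v 3)) := by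
    have hconj := hKW.and ((hC0.and hC2).and (hC34.and hCD))
    have := (Defd.ex 5 (Defd.ex 6 hconj)).mono
      (show ((({0,1,2,3,4,5,6} : Finset ℕ).erase 6).erase 5 : Finset ℕ) ⊆ {0,1,2,3,4}
        by decide)
    exact this.congr fun v => by simp [Function.update_apply]
  have hR : Defd ({0,1,2,3} : Finset ℕ) fun v =>
      ∃ r, betaN (v 0) (v 3) = r ∧ r = TStep (v 1) (betaN (v 0)) (v 3) := by
    have hbr : Defd ({0,1,2,3,4} : Finset ℕ) fun v => betaN (v 0) (v 3) = v 4 :=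
      (defd_beta' (p := 0) (q := 3) (r := 4) (by omega) (by omega) (by omega)).mono
        (by decide)
    have := (Defd.ex 4 (hbr.and hTS)).mono
      (show (({0,1,2,3,4} : Finset ℕ).erase 4 : Finset ℕ) ⊆ {0,1,2,3} by decide)
    refine this.congr fun v => ?_
    constructor
    · rintro ⟨r, h1, h2⟩
      refine ⟨r, ?_, ?_⟩
      · simpa [Function.update_apply] using h1
      · rw [← TS_iff (v 1) (v 3) r (betaN (v 0))]
        simpa [Function.update_apply] using h2
    · rintro ⟨r, h1, h2⟩
      refine ⟨r, ?_, ?_⟩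
      · simpa [Function.update_apply] using h1
      · rw [← TS_iff (v 1) (v 3) r (betaN (v 0))] at h2
        simpa [Function.update_apply] using h2
  have hle : Defd ({0,1,2,3} : Finset ℕ) fun v => v 3 ≤ v 2 :=
    Defd.le (tdv 3 (by decide)) (tdv 2 (by decide))
  have hfin := (Defd.all 3 (hle.imp hR)).mono
    (show (({0,1,2,3} : Finset ℕ).erase 3 : Finset ℕ) ⊆ {0,1,2} by decide)
  refine hfin.congr fun v => ?_
  refine forall_congr' fun z => ?_
  simp only [Function.update_apply]
  norm_num
/-! ### Definability of the formula-substitution table -/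

set_option maxHeartbeats 1000000 in

theorem FS_iff (z r : ℕ) (tg g : ℕ → ℕ) :
    (∃ k w, Nat.pair k w = z ∧
      ((((k = 0 ∨ k = 1) → ∃ w1 w2 c1 c2 cc, Nat.pair w1 w2 = w ∧ tg w1 = c1 ∧
          tg w2 = c2 ∧ Nat.pair c1 c2 = cc ∧ Nat.pair k cc = r) ∧
        (k = 2 → ∃ c, g w = c ∧ Nat.pair k c = r)) ∧
       ((k = 3 ∨ k = 4 ∨ k = 5) → ∃ w1 w2 c1 c2 cc, Nat.pair w1 w2 = w ∧ g w1 = c1 ∧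
          g w2 = c2 ∧ Nat.pair c1 c2 = cc ∧ Nat.pair k cc = r)) ∧
      ((((k = 6 ∨ k = 7) → ∃ w1 w2, Nat.pair w1 w2 = w ∧ ((w1 = 0 → r = z) ∧
          (¬ w1 = 0 → ∃ c2 cc, g w2 = c2 ∧ Nat.pair w1 c2 = cc ∧ Nat.pair k cc = r))) ∧
        ((¬ k = 0 ∧ ¬ k = 1 ∧ ¬ k = 2 ∧ ¬ k = 3 ∧ ¬ k = 4 ∧ ¬ k = 5 ∧ ¬ k = 6 ∧ ¬ k = 7) →
          r = z))))
    ↔ r = FStep 0 tg g z := by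
  constructor
  · rintro ⟨k, w, hkw, ⟨⟨hc01, hc2⟩, hc345⟩, hc67, hcd⟩
    have hk : k = z.unpair.1 := by rw [← hkw, Nat.unpair_pair]
    have hw : w = z.unpair.2 := by rw [← hkw, Nat.unpair_pair]
    subst hk; subst hw
    unfold FStep
    split_ifs with h1 h2 h3 h4 h5
    · obtain ⟨w1, w2, c1, c2, cc, hww, e1, e2, hcc, hr⟩ := hc01 h1
      have f1 : w1 = z.unpair.2.unpair.1 := by rw [← hww, Nat.unpair_pair]
      have f2 : w2 = z.unpair.2.unpair.2 := by rw [← hww, Nat.unpair_pair]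
      subst f1; subst f2
      rw [← hr, ← hcc, e1, e2]
    · obtain ⟨c, hgc, hp⟩ := hc2 h2
      rw [← hp, hgc, h2]
    · obtain ⟨w1, w2, c1, c2, cc, hww, e1, e2, hcc, hr⟩ := hc345 h3
      have f1 : w1 = z.unpair.2.unpair.1 := by rw [← hww, Nat.unpair_pair]
      have f2 : w2 = z.unpair.2.unpair.2 := by rw [← hww, Nat.unpair_pair]
      subst f1; subst f2
      rw [← hr, ← hcc, e1, e2]
    · obtain ⟨w1, w2, hww, hz0, _⟩ := hc67 h4
      have f1 : w1 = z.unpair.2.unpair.1 := by rw [← hww, Nat.unpair_pair]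
      subst f1
      exact hz0 h5
    · obtain ⟨w1, w2, hww, _, hz1⟩ := hc67 h4
      have f1 : w1 = z.unpair.2.unpair.1 := by rw [← hww, Nat.unpair_pair]
      have f2 : w2 = z.unpair.2.unpair.2 := by rw [← hww, Nat.unpair_pair]
      subst f1; subst f2
      obtain ⟨c2, cc, e2, hcc, hr⟩ := hz1 h5
      rw [← hr, ← hcc, e2]
    · refine hcd ⟨?_, ?_, ?_, ?_, ?_, ?_, ?_, ?_⟩ <;> omega
  · rintro rfl
    refine ⟨z.unpair.1, z.unpair.2, Nat.pair_unpair z, ⟨⟨?_, ?_⟩, ?_⟩, ?_, ?_⟩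
    · intro h1
      refine ⟨z.unpair.2.unpair.1, z.unpair.2.unpair.2, _, _, _,
        Nat.pair_unpair _, rfl, rfl, rfl, ?_⟩
      unfold FStep
      rw [if_pos h1]
    · intro h2
      have h1 : ¬ (z.unpair.1 = 0 ∨ z.unpair.1 = 1) := by omega
      exact ⟨g z.unpair.2, rfl, by unfold FStep; rw [if_neg h1, if_pos h2, h2]⟩
    · intro h3
      have h1 : ¬ (z.unpair.1 = 0 ∨ z.unpair.1 = 1) := by rcases h3 with h|h|h <;> omega
      have h2 : ¬ z.unpair.1 = 2 := by rcases h3 with h|h|h <;> omega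
      exact ⟨z.unpair.2.unpair.1, z.unpair.2.unpair.2, _, _, _,
        Nat.pair_unpair _, rfl, rfl, rfl,
        by unfold FStep; rw [if_neg h1, if_neg h2, if_pos h3]⟩
    · intro h4
      have h1 : ¬ (z.unpair.1 = 0 ∨ z.unpair.1 = 1) := by rcases h4 with h|h <;> omega
      have h2 : ¬ z.unpair.1 = 2 := by rcases h4 with h|h <;> omega
      have h3 : ¬ (z.unpair.1 = 3 ∨ z.unpair.1 = 4 ∨ z.unpair.1 = 5) := by
        rcases h4 with h|h <;> omega
      refine ⟨z.unpair.2.unpair.1, z.unpair.2.unpair.2, Nat.pair_unpair _, ?_, ?_⟩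
      · intro h5
        unfold FStep
        rw [if_neg h1, if_neg h2, if_neg h3, if_pos h4, if_pos h5]
      · intro h5
        refine ⟨g z.unpair.2.unpair.2, _, rfl, rfl, ?_⟩
        unfold FStep
        rw [if_neg h1, if_neg h2, if_neg h3, if_pos h4, if_neg h5]
    · rintro ⟨e0, e1, e2, e3, e4, e5, e6, e7⟩
      unfold FStep
      rw [if_neg (by tauto : ¬ (z.unpair.1 = 0 ∨ z.unpair.1 = 1)), if_neg e2,
        if_neg (by tauto : ¬ (z.unpair.1 = 3 ∨ z.unpair.1 = 4 ∨ z.unpair.1 = 5)),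
        if_neg (by tauto : ¬ (z.unpair.1 = 6 ∨ z.unpair.1 = 7))]

theorem FStep_s_irrel (s s' : ℕ) (tg g : ℕ → ℕ) (x : ℕ) :
    FStep s tg g x = FStep s' tg g x := rfl

theorem defd_FT : Defd {0, 1, 2, 3} fun v =>
    ∀ z, z ≤ v 3 → betaN (v 1) z = FStep (v 2) (betaN (v 0)) (betaN (v 1)) z := by
  classical
  -- variables: a=0 (term table), b=1 (formula table), s=2, N=3, z=4, r=5, k=6, w=7,
  -- then 8-12 for branches
  have keq : ∀ (n : ℕ), Defd ({0,1,2,3,4,5,6,7} : Finset ℕ) fun v => v 6 = n :=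
    fun n => Defd.eq (tdv 6 (by decide)) (TermD.const _ n)
  have hC01 : Defd ({0,1,2,3,4,5,6,7} : Finset ℕ) fun v =>
      (v 6 = 0 ∨ v 6 = 1) → ∃ w1 w2 c1 c2 cc, Nat.pair w1 w2 = v 7 ∧
        betaN (v 0) w1 = c1 ∧ betaN (v 0) w2 = c2 ∧ Nat.pair c1 c2 = cc ∧
        Nat.pair (v 6) cc = v 5 := by
    refine Defd.imp ((keq 0).or (keq 1)) ?_
    have hin : Defd ({0,1,2,3,4,5,6,7,8,9,10,11,12} : Finset ℕ) fun v =>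
        Nat.pair (v 8) (v 9) = v 7 ∧
        betaN (v 0) (v 8) = v 10 ∧ betaN (v 0) (v 9) = v 11 ∧
        Nat.pair (v 10) (v 11) = v 12 ∧ Nat.pair (v 6) (v 12) = v 5 :=
      ((defd_pair' (p := 8) (q := 9) (r := 7) (by omega) (by omega) (by omega)).mono
        (by decide)).and <|
      ((defd_beta' (p := 0) (q := 8) (r := 10) (by omega) (by omega) (by omega)).mono
        (by decide)).and <|
      ((defd_beta' (p := 0) (q := 9) (r := 11) (by omega) (by omega) (by omega)).mono
        (by decide)).and <|
      ((defd_pair' (p := 10) (q := 11) (r := 12) (by omega) (by omega) (by omega)).mono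
        (by decide)).and
      ((defd_pair' (p := 6) (q := 12) (r := 5) (by omega) (by omega) (by omega)).mono
        (by decide))
    have := (Defd.ex 8 (Defd.ex 9 (Defd.ex 10 (Defd.ex 11 (Defd.ex 12 hin))))).mono
      (show (((((({0,1,2,3,4,5,6,7,8,9,10,11,12} : Finset ℕ).erase 12).erase 11).erase
        10).erase 9).erase 8 : Finset ℕ) ⊆ {0,1,2,3,4,5,6,7} by decide)
    exact this.congr fun v => by simp [Function.update_apply]
  have hC2 : Defd ({0,1,2,3,4,5,6,7} : Finset ℕ) fun v =>
      v 6 = 2 → ∃ c, betaN (v 1) (v 7) = c ∧ Nat.pair (v 6) c = v 5 := by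
    refine Defd.imp (keq 2) ?_
    have hin : Defd ({0,1,2,3,4,5,6,7,8} : Finset ℕ) fun v =>
        betaN (v 1) (v 7) = v 8 ∧ Nat.pair (v 6) (v 8) = v 5 :=
      ((defd_beta' (p := 1) (q := 7) (r := 8) (by omega) (by omega) (by omega)).mono
        (by decide)).and
      ((defd_pair' (p := 6) (q := 8) (r := 5) (by omega) (by omega) (by omega)).mono
        (by decide))
    have := (Defd.ex 8 hin).mono
      (show ({0,1,2,3,4,5,6,7,8} : Finset ℕ).erase 8 ⊆ {0,1,2,3,4,5,6,7} by decide)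
    exact this.congr fun v => by simp [Function.update_apply]
  have hC345 : Defd ({0,1,2,3,4,5,6,7} : Finset ℕ) fun v =>
      (v 6 = 3 ∨ v 6 = 4 ∨ v 6 = 5) → ∃ w1 w2 c1 c2 cc, Nat.pair w1 w2 = v 7 ∧
        betaN (v 1) w1 = c1 ∧ betaN (v 1) w2 = c2 ∧ Nat.pair c1 c2 = cc ∧
        Nat.pair (v 6) cc = v 5 := by
    refine Defd.imp ((keq 3).or ((keq 4).or (keq 5))) ?_
    have hin : Defd ({0,1,2,3,4,5,6,7,8,9,10,11,12} : Finset ℕ) fun v =>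
        Nat.pair (v 8) (v 9) = v 7 ∧
        betaN (v 1) (v 8) = v 10 ∧ betaN (v 1) (v 9) = v 11 ∧
        Nat.pair (v 10) (v 11) = v 12 ∧ Nat.pair (v 6) (v 12) = v 5 :=
      ((defd_pair' (p := 8) (q := 9) (r := 7) (by omega) (by omega) (by omega)).mono
        (by decide)).and <|
      ((defd_beta' (p := 1) (q := 8) (r := 10) (by omega) (by omega) (by omega)).mono
        (by decide)).and <|
      ((defd_beta' (p := 1) (q := 9) (r := 11) (by omega) (by omega) (by omega)).mono
        (by decide)).and <|
      ((defd_pair' (p := 10) (q := 11) (r := 12) (by omega) (by omega) (by omega)).mono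
        (by decide)).and
      ((defd_pair' (p := 6) (q := 12) (r := 5) (by omega) (by omega) (by omega)).mono
        (by decide))
    have := (Defd.ex 8 (Defd.ex 9 (Defd.ex 10 (Defd.ex 11 (Defd.ex 12 hin))))).mono
      (show (((((({0,1,2,3,4,5,6,7,8,9,10,11,12} : Finset ℕ).erase 12).erase 11).erase
        10).erase 9).erase 8 : Finset ℕ) ⊆ {0,1,2,3,4,5,6,7} by decide)
    exact this.congr fun v => by simp [Function.update_apply]
  have hC67 : Defd ({0,1,2,3,4,5,6,7} : Finset ℕ) fun v =>
      (v 6 = 6 ∨ v 6 = 7) → ∃ w1 w2, Nat.pair w1 w2 = v 7 ∧ ((w1 = 0 → v 5 = v 4) ∧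
        (¬ w1 = 0 → ∃ c2 cc, betaN (v 1) w2 = c2 ∧ Nat.pair w1 c2 = cc ∧
          Nat.pair (v 6) cc = v 5)) := by
    refine Defd.imp ((keq 6).or (keq 7)) ?_
    have hin2 : Defd ({0,1,2,3,4,5,6,7,8,9,10,11} : Finset ℕ) fun v =>
        betaN (v 1) (v 9) = v 10 ∧ Nat.pair (v 8) (v 10) = v 11 ∧
        Nat.pair (v 6) (v 11) = v 5 :=
      ((defd_beta' (p := 1) (q := 9) (r := 10) (by omega) (by omega) (by omega)).mono
        (by decide)).and <|
      ((defd_pair' (p := 8) (q := 10) (r := 11) (by omega) (by omega) (by omega)).mono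
        (by decide)).and
      ((defd_pair' (p := 6) (q := 11) (r := 5) (by omega) (by omega) (by omega)).mono
        (by decide))
    have hinner : Defd ({0,1,2,3,4,5,6,7,8,9} : Finset ℕ) fun v =>
        ¬ v 8 = 0 → ∃ c2 cc, betaN (v 1) (v 9) = c2 ∧ Nat.pair (v 8) c2 = cc ∧
          Nat.pair (v 6) cc = v 5 := by
      refine Defd.imp (Defd.not (Defd.eq (tdv 8 (by decide)) (TermD.const _ 0))) ?_
      have := (Defd.ex 10 (Defd.ex 11 hin2)).mono
        (show ((({0,1,2,3,4,5,6,7,8,9,10,11} : Finset ℕ).erase 11).erase 10 : Finset ℕ) ⊆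
          {0,1,2,3,4,5,6,7,8,9} by decide)
      exact this.congr fun v => by simp [Function.update_apply]
    have hin : Defd ({0,1,2,3,4,5,6,7,8,9} : Finset ℕ) fun v =>
        Nat.pair (v 8) (v 9) = v 7 ∧ ((v 8 = 0 → v 5 = v 4) ∧
          (¬ v 8 = 0 → ∃ c2 cc, betaN (v 1) (v 9) = c2 ∧ Nat.pair (v 8) c2 = cc ∧
            Nat.pair (v 6) cc = v 5)) :=
      ((defd_pair' (p := 8) (q := 9) (r := 7) (by omega) (by omega) (by omega)).mono
        (by decide)).and <|
      ((Defd.imp (Defd.eq (tdv 8 (by decide)) (TermD.const _ 0))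
        (Defd.eq (tdv 5 (by decide)) (tdv 4 (by decide)))).and hinner)
    have := (Defd.ex 8 (Defd.ex 9 hin)).mono
      (show ((({0,1,2,3,4,5,6,7,8,9} : Finset ℕ).erase 9).erase 8 : Finset ℕ) ⊆
        {0,1,2,3,4,5,6,7} by decide)
    exact this.congr fun v => by simp [Function.update_apply]
  have hCD : Defd ({0,1,2,3,4,5,6,7} : Finset ℕ) fun v =>
      (¬ v 6 = 0 ∧ ¬ v 6 = 1 ∧ ¬ v 6 = 2 ∧ ¬ v 6 = 3 ∧ ¬ v 6 = 4 ∧ ¬ v 6 = 5 ∧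
        ¬ v 6 = 6 ∧ ¬ v 6 = 7) → v 5 = v 4 := by
    refine Defd.imp ?_ (Defd.eq (tdv 5 (by decide)) (tdv 4 (by decide)))
    exact ((keq 0).not).and <| ((keq 1).not).and <| ((keq 2).not).and <|
      ((keq 3).not).and <| ((keq 4).not).and <| ((keq 5).not).and <|
      ((keq 6).not).and ((keq 7).not)
  have hKW : Defd ({0,1,2,3,4,5,6,7} : Finset ℕ) fun v => Nat.pair (v 6) (v 7) = v 4 :=
    (defd_pair' (p := 6) (q := 7) (r := 4) (by omega) (by omega) (by omega)).mono
      (by decide)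
  have hFS : Defd ({0,1,2,3,4,5} : Finset ℕ) fun v =>
      ∃ k w, Nat.pair k w = v 4 ∧
        ((((k = 0 ∨ k = 1) → ∃ w1 w2 c1 c2 cc, Nat.pair w1 w2 = w ∧
            betaN (v 0) w1 = c1 ∧ betaN (v 0) w2 = c2 ∧ Nat.pair c1 c2 = cc ∧
            Nat.pair k cc = v 5) ∧
          (k = 2 → ∃ c, betaN (v 1) w = c ∧ Nat.pair k c = v 5)) ∧
         ((k = 3 ∨ k = 4 ∨ k = 5) → ∃ w1 w2 c1 c2 cc, Nat.pair w1 w2 = w ∧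
            betaN (v 1) w1 = c1 ∧ betaN (v 1) w2 = c2 ∧ Nat.pair c1 c2 = cc ∧
            Nat.pair k cc = v 5)) ∧
        ((((k = 6 ∨ k = 7) → ∃ w1 w2, Nat.pair w1 w2 = w ∧ ((w1 = 0 → v 5 = v 4) ∧
            (¬ w1 = 0 → ∃ c2 cc, betaN (v 1) w2 = c2 ∧ Nat.pair w1 c2 = cc ∧
              Nat.pair k cc = v 5))) ∧
          ((¬ k = 0 ∧ ¬ k = 1 ∧ ¬ k = 2 ∧ ¬ k = 3 ∧ ¬ k = 4 ∧ ¬ k = 5 ∧ ¬ k = 6 ∧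
            ¬ k = 7) → v 5 = v 4))) := by
    have hconj := hKW.and (((hC01.and hC2).and hC345).and (hC67.and hCD))
    have := (Defd.ex 6 (Defd.ex 7 hconj)).mono
      (show ((({0,1,2,3,4,5,6,7} : Finset ℕ).erase 7).erase 6 : Finset ℕ) ⊆
        {0,1,2,3,4,5} by decide)
    exact this.congr fun v => by simp [Function.update_apply]
  have hR : Defd ({0,1,2,3,4} : Finset ℕ) fun v =>
      ∃ r, betaN (v 1) (v 4) = r ∧
        r = FStep (v 2) (betaN (v 0)) (betaN (v 1)) (v 4) := by
    have hbr : Defd ({0,1,2,3,4,5} : Finset ℕ) fun v => betaN (v 1) (v 4) = v 5 :=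
      (defd_beta' (p := 1) (q := 4) (r := 5) (by omega) (by omega) (by omega)).mono
        (by decide)
    have := (Defd.ex 5 (hbr.and hFS)).mono
      (show (({0,1,2,3,4,5} : Finset ℕ).erase 5 : Finset ℕ) ⊆ {0,1,2,3,4} by decide)
    refine this.congr fun v => ?_
    constructor
    · rintro ⟨r, h1, h2⟩
      refine ⟨r, ?_, ?_⟩
      · simpa [Function.update_apply] using h1
      · rw [FStep_s_irrel (v 2) 0, ← FS_iff (v 4) r (betaN (v 0)) (betaN (v 1))]
        simpa [Function.update_apply] using h2
    · rintro ⟨r, h1, h2⟩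
      refine ⟨r, ?_, ?_⟩
      · simpa [Function.update_apply] using h1
      · rw [FStep_s_irrel (v 2) 0, ← FS_iff (v 4) r (betaN (v 0)) (betaN (v 1))] at h2
        simpa [Function.update_apply] using h2
  have hle : Defd ({0,1,2,3,4} : Finset ℕ) fun v => v 4 ≤ v 3 :=
    Defd.le (tdv 4 (by decide)) (tdv 3 (by decide))
  have hfin := (Defd.all 4 (hle.imp hR)).mono
    (show (({0,1,2,3,4} : Finset ℕ).erase 4 : Finset ℕ) ⊆ {0,1,2,3} by decide)
  refine hfin.congr fun v => ?_
  refine forall_congr' fun z => ?_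
  simp only [Function.update_apply]
  norm_num
/-! ### Definability of the numeral-code table and of the diagonal function -/

theorem defd_NT : Defd {0, 1} fun v =>
    betaN (v 0) 0 = Nat.pair 1 0 ∧
      ∀ i, i < v 1 → betaN (v 0) (i + 1) = Nat.pair 2 (betaN (v 0) i) := by
  classical
  have hp2 : Nat.pair 1 0 = 2 := rfl
  -- part A : betaN c 0 = 2 ; vars c=0, e=1, bound i=2, r=3
  have hA : Defd ({0, 1} : Finset ℕ) fun v => betaN (v 0) 0 = Nat.pair 1 0 := by
    have hin : Defd ({0,1,2,3} : Finset ℕ) fun v =>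
        v 2 = 0 ∧ v 3 = 2 ∧ betaN (v 0) (v 2) = v 3 :=
      (Defd.eq (tdv 2 (by decide)) (TermD.const _ 0)).and <|
      (Defd.eq (tdv 3 (by decide)) (TermD.const _ 2)).and
      ((defd_beta' (p := 0) (q := 2) (r := 3) (by omega) (by omega) (by omega)).mono
        (by decide))
    have := (Defd.ex 2 (Defd.ex 3 hin)).mono
      (show ((({0,1,2,3} : Finset ℕ).erase 3).erase 2 : Finset ℕ) ⊆ {0,1} by decide)
    refine this.congr fun v => ?_
    rw [hp2]
    simp [Function.update_apply]
  -- part B ; vars i=2, x=3, w=4, u=5, t=6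
  have hB : Defd ({0, 1} : Finset ℕ) fun v =>
      ∀ i, i < v 1 → betaN (v 0) (i + 1) = Nat.pair 2 (betaN (v 0) i) := by
    have hin : Defd ({0,1,2,3,4,5,6} : Finset ℕ) fun v =>
        betaN (v 0) (v 2) = v 3 ∧ v 4 = v 2 + 1 ∧ betaN (v 0) (v 4) = v 5 ∧
          v 6 = 2 ∧ Nat.pair (v 6) (v 3) = v 5 :=
      ((defd_beta' (p := 0) (q := 2) (r := 3) (by omega) (by omega) (by omega)).mono
        (by decide)).and <|
      (Defd.eq (tdv 4 (by decide)) ((tdv 2 (by decide)).add (TermD.const _ 1))).and <|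
      ((defd_beta' (p := 0) (q := 4) (r := 5) (by omega) (by omega) (by omega)).mono
        (by decide)).and <|
      (Defd.eq (tdv 6 (by decide)) (TermD.const _ 2)).and
      ((defd_pair' (p := 6) (q := 3) (r := 5) (by omega) (by omega) (by omega)).mono
        (by decide))
    have hex := (Defd.ex 3 (Defd.ex 4 (Defd.ex 5 (Defd.ex 6 hin)))).mono
      (show ((((({0,1,2,3,4,5,6} : Finset ℕ).erase 6).erase 5).erase 4).erase 3 :
        Finset ℕ) ⊆ {0,1,2} by decide)
    have hlt : Defd ({0,1,2} : Finset ℕ) fun v => v 2 < v 1 :=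
      Defd.lt (tdv 2 (by decide)) (tdv 1 (by decide))
    have := (Defd.all 2 (hlt.imp hex)).mono
      (show (({0,1,2} : Finset ℕ).erase 2 : Finset ℕ) ⊆ {0,1} by decide)
    refine this.congr fun v => ?_
    refine forall_congr' fun i => ?_
    simp only [Function.update_apply]
    norm_num only [ite_true, ite_false]
    constructor
    · intro h hi
      obtain ⟨x, w, u, t, h1, rfl, h3, rfl, h5⟩ := h hi
      rw [← h3, ← h1] at h5
      exact h5.symm
    · intro h hi
      exact ⟨betaN (v 0) i, i + 1, betaN (v 0) (i + 1), 2, rfl, rfl, rfl, rfl,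
        (h hi).symm⟩
  exact hA.and hB

theorem defd_DRel : Defd {0, 1} fun v => DRel (v 0) (v 1) := by
  classical
  -- e=0, m=1, c=2, s=3, a=4, b=5
  have hNT' : Defd ({2, 0} : Finset ℕ) fun v =>
      betaN (v 2) 0 = Nat.pair 1 0 ∧
        ∀ i, i < v 0 → betaN (v 2) (i + 1) = Nat.pair 2 (betaN (v 2) i) :=
    Defd.of2 (R := fun c e => betaN c 0 = Nat.pair 1 0 ∧
      ∀ i, i < e → betaN c (i + 1) = Nat.pair 2 (betaN c i)) defd_NT (by omega)
  have hbs : Defd ({2, 0, 3} : Finset ℕ) fun v => betaN (v 2) (v 0) = v 3 :=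
    defd_beta' (by omega) (by omega) (by omega)
  have hTT' : Defd ({4, 3, 0} : Finset ℕ) fun v =>
      ∀ z, z ≤ v 0 → betaN (v 4) z = TStep (v 3) (betaN (v 4)) z :=
    Defd.of3 (R := fun a s N => ∀ z, z ≤ N → betaN a z = TStep s (betaN a) z)
      defd_TT (by omega) (by omega) (by omega)
  have hFT' : Defd ({4, 5, 3, 0} : Finset ℕ) fun v =>
      ∀ z, z ≤ v 0 → betaN (v 5) z = FStep (v 3) (betaN (v 4)) (betaN (v 5)) z :=
    Defd.of4 (R := fun a b s N => ∀ z, z ≤ N → betaN b z = FStep s (betaN a) (betaN b) z)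
      defd_FT (by omega) (by omega) (by omega) (by omega) (by omega) (by omega)
  have hbm : Defd ({5, 0, 1} : Finset ℕ) fun v => betaN (v 5) (v 0) = v 1 :=
    defd_beta' (by omega) (by omega) (by omega)
  have hconj : Defd ({0,1,2,3,4,5} : Finset ℕ) fun v =>
      ((betaN (v 2) 0 = Nat.pair 1 0 ∧
          (∀ i, i < v 0 → betaN (v 2) (i + 1) = Nat.pair 2 (betaN (v 2) i))) ∧
        betaN (v 2) (v 0) = v 3) ∧
      (((∀ z, z ≤ v 0 → betaN (v 4) z = TStep (v 3) (betaN (v 4)) z) ∧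
        (∀ z, z ≤ v 0 → betaN (v 5) z = FStep (v 3) (betaN (v 4)) (betaN (v 5)) z)) ∧
       betaN (v 5) (v 0) = v 1) := by
    refine ((hNT'.mono (by decide)).and (hbs.mono (by decide))).and
      (((hTT'.mono (by decide)).and (hFT'.mono (by decide))).and (hbm.mono (by decide)))
  have := (Defd.ex 2 (Defd.ex 3 (Defd.ex 4 (Defd.ex 5 hconj)))).mono
    (show ((((({0,1,2,3,4,5} : Finset ℕ).erase 5).erase 4).erase 3).erase 2 : Finset ℕ) ⊆
      {0,1} by decide)
  refine this.congr fun v => ?_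
  simp only [DRel, Function.update_apply]
  norm_num
/-! ### The diagonal function is definable -/

theorem defd_dN : Defd {0, 1} fun v => v 1 = dN (v 0) :=
  defd_DRel.congr fun v => DRel_iff (v 0) (v 1)

/-- **Tarski's theorem.** The set of Gödel numbers of true sentences is not definable. -/
theorem tarski_undefinability :
    ¬ Definable {m : ℕ | ∃ σ : Formula, σ.IsSentence ∧ IsTrue σ ∧ m = σ.gnum} := by
  classical
  set A : Set ℕ := {m : ℕ | ∃ σ : Formula, σ.IsSentence ∧ IsTrue σ ∧ m = σ.gnum} with hAdef
  rintro ⟨φT, hfv, hA⟩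
  -- pick a variable u not occurring in φT, and u ≠ 0
  set u : ℕ := (insert 0 φT.allVars).sup id + 1 with hu
  have hu_nmem : u ∉ φT.allVars := by
    intro hc
    have : u ≤ (insert 0 φT.allVars).sup id :=
      Finset.le_sup (f := id) (Finset.mem_insert_of_mem hc)
    omega
  have hu0 : u ≠ 0 := by omega
  -- semantic characterization of φT
  have hTsem : ∀ (j : ℕ) (w : ℕ → ℕ), w 0 = j →
      (Formula.Realize stdModel w φT ↔ j ∈ A) := by
    intro j w hw
    have hiff := hA j
    have hsub : ∀ v : ℕ → ℕ, Formula.Realize stdModel v (φT.subst 0 (numeral j)) ↔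
        Formula.Realize stdModel (Function.update v 0 j) φT := by
      intro v
      rw [Formula.realize_subst (by simp [numeral_varsOf])]
      rw [numeral_val]
    constructor
    · intro hreal
      rw [hiff]
      intro v
      rw [hsub]
      refine (Formula.realize_congr fun i hi => ?_).2 hreal
      have : i = 0 := by simpa using hfv hi
      subst this
      rw [Function.update_self, hw]
    · intro hmem
      have := (hiff.1 hmem) w
      rw [hsub] at this
      refine (Formula.realize_congr fun i hi => ?_).1 this
      have : i = 0 := by simpa using hfv hi
      subst this
      rw [Function.update_self, hw]
  -- the formula φT with variable u plugged in for v0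
  set φT' : Formula := φT.subst 0 (.var u) with hφT'
  have hT'sem : ∀ w : ℕ → ℕ, Formula.Realize stdModel w φT' ↔ (w u) ∈ A := by
    intro w
    rw [hφT', Formula.realize_subst (by
      intro y hy
      simp only [Term.varsOf, Finset.mem_singleton] at hy
      subst hy
      exact hu_nmem)]
    exact hTsem (w u) _ (Function.update_self _ _ _)
  have hT'fv : φT'.freeVars ⊆ {u} := by
    refine Formula.freeVars_subst.trans ?_
    intro y hy
    rcases Finset.mem_union.1 hy with h | h
    · exfalso
      have h0 := Finset.mem_erase.1 h
      have := hfv h0.2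
      simp only [Finset.mem_singleton] at this
      exact h0.1 this
    · simpa [Term.varsOf] using h
  -- the defining formula for the diagonal function, with output variable u
  obtain ⟨Dφ, hDfv, hDsem⟩ :=
    Defd.of2 (R := fun e m => m = dN e) defd_dN (show (0 : ℕ) ≠ u from fun h => hu0 h.symm)
  -- the liar formula
  set ψ : Formula := .ex u (.and Dφ (.not φT')) with hψ
  have hψfv : ψ.freeVars ⊆ {0} := by
    rw [hψ]
    simp only [Formula.freeVars]
    intro y hy
    have hy' := Finset.mem_erase.1 hy
    rcases Finset.mem_union.1 hy'.2 with h | h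
    · have := hDfv h
      simp only [Finset.mem_insert, Finset.mem_singleton] at this ⊢
      rcases this with h' | h'
      · exact h'
      · exact absurd h' hy'.1
    · have := hT'fv h
      simp only [Finset.mem_singleton] at this
      exact absurd this hy'.1
  have hψsem : ∀ v : ℕ → ℕ, Formula.Realize stdModel v ψ ↔ dN (v 0) ∉ A := by
    intro v
    rw [hψ]
    simp only [Formula.Realize]
    constructor
    · rintro ⟨a, h1, h2⟩
      have ha : a = dN (v 0) := by
        have := (hDsem _).1 h1
        simpa [Function.update_self, Function.update_of_ne hu0,
          Function.update_of_ne (Ne.symm hu0)] using this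
      rw [hT'sem] at h2
      rw [Function.update_self] at h2
      rwa [ha] at h2
    · intro h
      refine ⟨dN (v 0), ?_, ?_⟩
      · rw [hDsem]
        simp [Function.update_self, Function.update_of_ne hu0,
          Function.update_of_ne (Ne.symm hu0)]
      · rw [hT'sem, Function.update_self]
        exact h
  -- the liar sentence
  set lam : Formula := ψ.subst 0 (numeral ψ.gnum) with hlam
  have hlamsem : ∀ v : ℕ → ℕ, Formula.Realize stdModel v lam ↔ dN ψ.gnum ∉ A := by
    intro v
    rw [hlam, Formula.realize_subst (by simp [numeral_varsOf])]
    rw [numeral_val]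
    rw [hψsem, Function.update_self]
  have hlamsent : lam.IsSentence := by
    rw [Formula.IsSentence]
    rw [Finset.eq_empty_iff_forall_notMem]
    intro y hy
    have := Formula.freeVars_subst hy
    rcases Finset.mem_union.1 this with h | h
    · have h0 := Finset.mem_erase.1 h
      have := hψfv h0.2
      simp only [Finset.mem_singleton] at this
      exact h0.1 this
    · rw [numeral_varsOf] at h
      exact absurd h (Finset.notMem_empty y)
  have hdn : dN ψ.gnum = lam.gnum := dN_gnum ψ
  by_cases h : dN ψ.gnum ∈ A
  · -- lam is false, but its Gödel number is in A, so lam is true: contradiction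
    obtain ⟨σ, hσsent, hσtrue, hσg⟩ := by rwa [hdn, hAdef] at h
    have hσlam : σ = lam := Formula.gnum_injective hσg.symm
    have : Formula.Realize stdModel (fun _ => 0) lam := hσlam ▸ hσtrue (fun _ => 0)
    rw [hlamsem] at this
    exact this h
  · -- lam is true, so its Gödel number is in A: contradiction
    have htrue : IsTrue lam := fun v => (hlamsem v).2 h
    exact h (by rw [hdn, hAdef]; exact ⟨lam, hlamsent, htrue, rfl⟩)

end Boolos
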